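/- arXiv:1905.10194 — 9 statements merged into one kernel-verified Lean document; each statement's English description precedes it below -/
import Mathlib

section
/- Let ℓ : ℝ^n → ℝ be differentiable, μ-strongly convex and L-smooth with 0 < μ ≤ L, and let w* be its global minimizer. Let w ∈ ℝ^n with w ≠ w*, and let g ∈ ℝ^n be a nonzero estimated gradient whose gradient estimation angle satisfies ∠(g, ∇ℓ(w)) + arccos√(μ/L) ≤ θ for some θ < π/2. Then there exists a learning rate η > 0 such that ‖(w − η·g) − w*‖ ≤ sin(θ)·‖w − w*‖. -/
open InnerProductGeometry RealInnerProductSpace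

private lemma my_arccos_le_arccos {x y : ℝ} (h : x ≤ y) : Real.arccos y ≤ Real.arccos x := by
  rw [Real.arccos_eq_pi_div_two_sub_arcsin, Real.arccos_eq_pi_div_two_sub_arcsin]
  linarith [Real.monotone_arcsin h]

set_option maxHeartbeats 1000000 in
/-- One step of estimated gradient descent: if the gradient estimation angle plus the
convex-smooth angle `arccos √(μ/L)` is at most `θ < π/2`, then there is a learning rate
`η > 0` contracting the distance to the global minimizer by a factor `sin θ`. -/
theorem egd_one_step_contraction {n : ℕ} (ℓ : EuclideanSpace ℝ (Fin n) → ℝ) (μ L : ℝ)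
    (hμ : 0 < μ) (hμL : μ ≤ L)
    (hdiff : Differentiable ℝ ℓ)
    (hsc : ∀ a b : EuclideanSpace ℝ (Fin n),
      ℓ a + ⟪gradient ℓ a, b - a⟫ + μ / 2 * ‖b - a‖ ^ 2 ≤ ℓ b)
    (hsm : ∀ a b : EuclideanSpace ℝ (Fin n),
      ℓ b ≤ ℓ a + ⟪gradient ℓ a, b - a⟫ + L / 2 * ‖b - a‖ ^ 2)
    (wstar : EuclideanSpace ℝ (Fin n)) (hmin : ∀ w, ℓ wstar ≤ ℓ w)
    (w g : EuclideanSpace ℝ (Fin n)) (hw : w ≠ wstar) (hg : g ≠ 0)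
    (θ : ℝ) (hθ : θ < Real.pi / 2)
    (hangle : angle g (gradient ℓ w) + Real.arccos (Real.sqrt (μ / L)) ≤ θ) :
    ∃ η : ℝ, 0 < η ∧ ‖w - η • g - wstar‖ ≤ Real.sin θ * ‖w - wstar‖ := by
  have hL : 0 < L := lt_of_lt_of_le hμ hμL
  set D := gradient ℓ w with hDdef
  set v : EuclideanSpace ℝ (Fin n) := w - wstar with hvdef
  have hvne : v ≠ 0 := sub_ne_zero.mpr hw
  have hvpos : 0 < ‖v‖ := norm_pos_iff.mpr hvne
  have hgpos : 0 < ‖g‖ := norm_pos_iff.mpr hg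
  -- gradient at the minimizer is zero
  have hG0 : gradient ℓ wstar = 0 := by
    by_contra hne
    set G := gradient ℓ wstar with hGdef
    have hGpos : 0 < ‖G‖ := norm_pos_iff.mpr hne
    have h := hsm wstar (wstar - L⁻¹ • G)
    have h2 := hmin (wstar - L⁻¹ • G)
    have e1 : wstar - L⁻¹ • G - wstar = -(L⁻¹ • G) := by abel
    rw [e1] at h
    have e2 : ⟪G, -(L⁻¹ • G)⟫ = -(L⁻¹ * ‖G‖ ^ 2) := by
      rw [inner_neg_right, real_inner_smul_right, real_inner_self_eq_norm_sq]
    have e3 : ‖-(L⁻¹ • G)‖ = L⁻¹ * ‖G‖ := by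
      rw [norm_neg, norm_smul, Real.norm_eq_abs, abs_of_pos (inv_pos.mpr hL)]
    rw [e2, e3] at h
    have e4 : L / 2 * (L⁻¹ * ‖G‖) ^ 2 = L⁻¹ / 2 * ‖G‖ ^ 2 := by
      field_simp
    rw [e4] at h
    have hpos : 0 < L⁻¹ / 2 * ‖G‖ ^ 2 := by positivity
    linarith
  -- gap lower bound
  have hgap : μ / 2 * ‖v‖ ^ 2 ≤ ℓ w - ℓ wstar := by
    have h := hsc wstar w
    rw [hG0] at h
    simp only [inner_zero_left] at h
    rw [← hvdef] at h
    linarith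
  -- inner product lower bound
  have hDv : ℓ w - ℓ wstar + μ / 2 * ‖v‖ ^ 2 ≤ ⟪D, v⟫ := by
    have h := hsc w wstar
    have e1 : wstar - w = -v := by rw [hvdef]; abel
    rw [e1, inner_neg_right, norm_neg] at h
    linarith
  have hv2pos : 0 < ‖v‖ ^ 2 := by positivity
  have hDvpos : 0 < ⟪D, v⟫ := by nlinarith [mul_pos hμ hv2pos]
  have hDne : D ≠ 0 := by
    intro h0
    rw [h0, inner_zero_left] at hDvpos
    exact lt_irrefl 0 hDvpos
  have hDpos : 0 < ‖D‖ := norm_pos_iff.mpr hDne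
  -- ‖D‖² ≤ 2 L (ℓ w - ℓ wstar)
  have hDsq : ‖D‖ ^ 2 ≤ 2 * L * (ℓ w - ℓ wstar) := by
    have h := hsm w (w - L⁻¹ • D)
    have h2 := hmin (w - L⁻¹ • D)
    have e1 : w - L⁻¹ • D - w = -(L⁻¹ • D) := by abel
    rw [e1] at h
    have e2 : ⟪D, -(L⁻¹ • D)⟫ = -(L⁻¹ * ‖D‖ ^ 2) := by
      rw [inner_neg_right, real_inner_smul_right, real_inner_self_eq_norm_sq]
    have e3 : ‖-(L⁻¹ • D)‖ = L⁻¹ * ‖D‖ := by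
      rw [norm_neg, norm_smul, Real.norm_eq_abs, abs_of_pos (inv_pos.mpr hL)]
    rw [e2, e3] at h
    have e4 : L / 2 * (L⁻¹ * ‖D‖) ^ 2 = L⁻¹ / 2 * ‖D‖ ^ 2 := by
      field_simp
    rw [e4] at h
    have hcomb : L⁻¹ / 2 * ‖D‖ ^ 2 ≤ ℓ w - ℓ wstar := by linarith
    have h3 : 2 * L * (L⁻¹ / 2 * ‖D‖ ^ 2) ≤ 2 * L * (ℓ w - ℓ wstar) :=
      mul_le_mul_of_nonneg_left hcomb (by linarith)
    have h4 : 2 * L * (L⁻¹ / 2 * ‖D‖ ^ 2) = ‖D‖ ^ 2 := by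
      field_simp
    linarith
  -- coherence: √(μ/L) ‖D‖ ‖v‖ ≤ ⟪D,v⟫
  have hc2 : Real.sqrt (μ / L) * L = Real.sqrt μ * Real.sqrt L := by
    rw [Real.sqrt_div hμ.le, div_mul_eq_mul_div, mul_div_assoc, Real.div_sqrt]
  have hcoh : Real.sqrt (μ / L) * (‖D‖ * ‖v‖) ≤ ⟪D, v⟫ := by
    have hamgm : 2 * (Real.sqrt μ * Real.sqrt L) * (‖D‖ * ‖v‖) ≤ ‖D‖ ^ 2 + μ * L * ‖v‖ ^ 2 := by
      have hml : (Real.sqrt μ * Real.sqrt L) ^ 2 = μ * L := by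
        rw [mul_pow, Real.sq_sqrt hμ.le, Real.sq_sqrt hL.le]
      nlinarith [sq_nonneg (‖D‖ - Real.sqrt μ * Real.sqrt L * ‖v‖), hml]
    have hsum : ‖D‖ ^ 2 + μ * L * ‖v‖ ^ 2 ≤ 2 * L * ⟪D, v⟫ := by nlinarith [hDsq, hDv, hgap]
    have h1 : 2 * L * (Real.sqrt (μ / L) * (‖D‖ * ‖v‖)) ≤ 2 * L * ⟪D, v⟫ := by
      calc 2 * L * (Real.sqrt (μ / L) * (‖D‖ * ‖v‖))
          = 2 * (Real.sqrt (μ / L) * L) * (‖D‖ * ‖v‖) := by ring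
        _ = 2 * (Real.sqrt μ * Real.sqrt L) * (‖D‖ * ‖v‖) := by rw [hc2]
        _ ≤ ‖D‖ ^ 2 + μ * L * ‖v‖ ^ 2 := hamgm
        _ ≤ 2 * L * ⟪D, v⟫ := hsum
    exact le_of_mul_le_mul_left h1 (by positivity)
  set α := angle g D with hαdef
  set β := angle D v with hβdef
  -- β ≤ arccos √(μ/L)
  have hβle : β ≤ Real.arccos (Real.sqrt (μ / L)) := by
    have hratio : Real.sqrt (μ / L) ≤ ⟪D, v⟫ / (‖D‖ * ‖v‖) := by
      rw [le_div_iff₀ (by positivity)]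
      linarith [hcoh]
    exact my_arccos_le_arccos hratio
  -- unit vector along D
  set u : EuclideanSpace ℝ (Fin n) := ‖D‖⁻¹ • D with hudef
  have huu : ⟪u, u⟫ = 1 := by
    rw [hudef, real_inner_smul_left, real_inner_smul_right, real_inner_self_eq_norm_sq]
    field_simp [hDpos.ne']
  have hnu : ‖u‖ ^ 2 = 1 := by rw [← real_inner_self_eq_norm_sq]; exact huu
  have hs : ⟪u, g⟫ = ‖g‖ * Real.cos α := by
    rw [hudef, real_inner_smul_left, real_inner_comm g D, hαdef, cos_angle]
    field_simp
  have ht : ⟪u, v⟫ = ‖v‖ * Real.cos β := by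
    rw [hudef, real_inner_smul_left, hβdef, cos_angle]
    field_simp
  have hsinα : 0 ≤ Real.sin α := Real.sin_nonneg_of_nonneg_of_le_pi (angle_nonneg g D) (angle_le_pi g D)
  have hsinβ : 0 ≤ Real.sin β := Real.sin_nonneg_of_nonneg_of_le_pi (angle_nonneg D v) (angle_le_pi D v)
  have hnormg : ‖g - ⟪u, g⟫ • u‖ = ‖g‖ * Real.sin α := by
    have h1 : ‖g - ⟪u, g⟫ • u‖ ^ 2 = (‖g‖ * Real.sin α) ^ 2 := by
      rw [norm_sub_sq_real, real_inner_smul_right, norm_smul, Real.norm_eq_abs, mul_pow, sq_abs,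
        hnu, real_inner_comm u g, hs]
      nlinarith [Real.sin_sq_add_cos_sq α]
    calc ‖g - ⟪u, g⟫ • u‖ = Real.sqrt (‖g - ⟪u, g⟫ • u‖ ^ 2) := (Real.sqrt_sq (norm_nonneg _)).symm
      _ = Real.sqrt ((‖g‖ * Real.sin α) ^ 2) := by rw [h1]
      _ = ‖g‖ * Real.sin α := Real.sqrt_sq (mul_nonneg (norm_nonneg g) hsinα)
  have hnormv : ‖v - ⟪u, v⟫ • u‖ = ‖v‖ * Real.sin β := by
    have h1 : ‖v - ⟪u, v⟫ • u‖ ^ 2 = (‖v‖ * Real.sin β) ^ 2 := by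
      rw [norm_sub_sq_real, real_inner_smul_right, norm_smul, Real.norm_eq_abs, mul_pow, sq_abs,
        hnu, real_inner_comm u v, ht]
      nlinarith [Real.sin_sq_add_cos_sq β]
    calc ‖v - ⟪u, v⟫ • u‖ = Real.sqrt (‖v - ⟪u, v⟫ • u‖ ^ 2) := (Real.sqrt_sq (norm_nonneg _)).symm
      _ = Real.sqrt ((‖v‖ * Real.sin β) ^ 2) := by rw [h1]
      _ = ‖v‖ * Real.sin β := Real.sqrt_sq (mul_nonneg (norm_nonneg v) hsinβ)
  have hkey : ⟪g, v⟫ = ⟪u, g⟫ * ⟪u, v⟫ + ⟪g - ⟪u, g⟫ • u, v - ⟪u, v⟫ • u⟫ := by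
    simp only [inner_sub_left, inner_sub_right, real_inner_smul_left, real_inner_smul_right, huu]
    rw [real_inner_comm u g]
    ring
  have hCS : -(‖g - ⟪u, g⟫ • u‖ * ‖v - ⟪u, v⟫ • u‖) ≤ ⟪g - ⟪u, g⟫ • u, v - ⟪u, v⟫ • u⟫ := by
    have h1 := abs_real_inner_le_norm (g - ⟪u, g⟫ • u) (v - ⟪u, v⟫ • u)
    have h2 := neg_abs_le ⟪g - ⟪u, g⟫ • u, v - ⟪u, v⟫ • u⟫
    linarith
  have hmain : ‖g‖ * ‖v‖ * Real.cos (α + β) ≤ ⟪g, v⟫ := by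
    rw [hnormg, hnormv, hs, ht] at hCS
    rw [hkey, hs, ht, Real.cos_add]
    nlinarith [hCS]
  -- compare with θ
  have hα0 : 0 ≤ α := angle_nonneg g D
  have hβ0 : 0 ≤ β := angle_nonneg D v
  have harccos0 : 0 ≤ Real.arccos (Real.sqrt (μ / L)) := Real.arccos_nonneg _
  have hθ0 : 0 ≤ θ := by linarith
  have hab : α + β ≤ θ := by linarith
  have hθpi : θ ≤ Real.pi := by linarith [Real.pi_pos]
  have hcos : Real.cos θ ≤ Real.cos (α + β) :=
    Real.cos_le_cos_of_nonneg_of_le_pi (by linarith) hθpi hab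
  have hcosθpos : 0 < Real.cos θ :=
    Real.cos_pos_of_mem_Ioo ⟨by linarith [Real.pi_pos], hθ⟩
  have hgv : ‖g‖ * ‖v‖ * Real.cos θ ≤ ⟪g, v⟫ := by
    calc ‖g‖ * ‖v‖ * Real.cos θ ≤ ‖g‖ * ‖v‖ * Real.cos (α + β) := by
          apply mul_le_mul_of_nonneg_left hcos (by positivity)
      _ ≤ ⟪g, v⟫ := hmain
  have hgvpos : 0 < ⟪g, v⟫ := lt_of_lt_of_le (by positivity) hgv
  -- the learning rate
  obtain ⟨i, hidef⟩ : ∃ i : ℝ, ⟪g, v⟫ = i := ⟨_, rfl⟩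
  rw [hidef] at hgv hgvpos
  refine ⟨i / ‖g‖ ^ 2, by positivity, ?_⟩
  have hsub : w - (i / ‖g‖ ^ 2) • g - wstar = v - (i / ‖g‖ ^ 2) • g := by
    rw [hvdef]; abel
  rw [hsub]
  have hsinθ : 0 ≤ Real.sin θ := Real.sin_nonneg_of_nonneg_of_le_pi hθ0 hθpi
  clear_value v
  clear * - hgv hgvpos hgpos hvpos hsinθ hidef hcosθpos
  have hsq : ‖v - (i / ‖g‖ ^ 2) • g‖ ^ 2 ≤ (Real.sin θ * ‖v‖) ^ 2 := by
    rw [norm_sub_sq_real, real_inner_smul_right, norm_smul, Real.norm_eq_abs, mul_pow, sq_abs,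
      real_inner_comm g v, hidef]
    have hg2 : (0:ℝ) < ‖g‖ ^ 2 := by positivity
    have e : ‖v‖ ^ 2 - 2 * (i / ‖g‖ ^ 2 * i) + (i / ‖g‖ ^ 2) ^ 2 * ‖g‖ ^ 2
        = ‖v‖ ^ 2 - i ^ 2 / ‖g‖ ^ 2 := by
      field_simp
      ring
    rw [e]
    have h1 : (‖g‖ * ‖v‖ * Real.cos θ) ^ 2 ≤ i ^ 2 :=
      pow_le_pow_left₀ (mul_nonneg (mul_nonneg (norm_nonneg g) (norm_nonneg v)) hcosθpos.le) hgv 2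
    have hq : ‖v‖ ^ 2 * Real.cos θ ^ 2 * ‖g‖ ^ 2 ≤ i ^ 2 := by nlinarith [h1]
    have hq2 : ‖v‖ ^ 2 * Real.cos θ ^ 2 ≤ i ^ 2 / ‖g‖ ^ 2 :=
      (le_div_iff₀ hg2).mpr hq
    nlinarith [Real.sin_sq_add_cos_sq θ, hq2, sq_nonneg ‖v‖]
  calc ‖v - (i / ‖g‖ ^ 2) • g‖
      = Real.sqrt (‖v - (i / ‖g‖ ^ 2) • g‖ ^ 2) := (Real.sqrt_sq (norm_nonneg _)).symm
    _ ≤ Real.sqrt ((Real.sin θ * ‖v‖) ^ 2) := Real.sqrt_le_sqrt hsq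
    _ = Real.sin θ * ‖v‖ := Real.sqrt_sq (mul_nonneg hsinθ (norm_nonneg v))
end

section
/- Let A be a real m × n matrix such that A·Aᵀ is positive definite, with eigenvalues of A·Aᵀ equal to σ_1, …, σ_m > 0; set σ_min = min_i σ_i and σ_max = max_i σ_i. If ρ ≥ σ_max/σ_min (so ρ ≥ 1), then for any nonzero vectors u, v ∈ ℝ^m, cos ∠(Aᵀu, Aᵀv) ≥ ρ·cos ∠(u, v) + 1 − ρ. -/
open InnerProductGeometry Matrix

open scoped RealInnerProductSpace

/-- Rayleigh quotient bounds for a real symmetric matrix. -/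
lemma rayleigh_bounds_aux {m : ℕ} [NeZero m] {M : Matrix (Fin m) (Fin m) ℝ}
    (hH : M.IsHermitian) (x : EuclideanSpace ℝ (Fin m)) :
    (⨅ i, hH.eigenvalues i) * ‖x‖ ^ 2 ≤ ⟪Matrix.toEuclideanLin M x, x⟫ ∧
      ⟪Matrix.toEuclideanLin M x, x⟫ ≤ (⨆ i, hH.eigenvalues i) * ‖x‖ ^ 2 := by
  set L := Matrix.toEuclideanLin M with hLdef
  have hsym : (Matrix.toEuclideanLin M).IsSymmetric :=
    (Matrix.isHermitian_iff_isSymmetric.mp hH)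
  set e := hH.eigenvectorBasis with he
  have heig : ∀ j, L (e j) = hH.eigenvalues j • e j := by
    intro j
    have h := hH.mulVec_eigenvectorBasis j
    apply (WithLp.equiv 2 _).injective
    simpa [hLdef, Matrix.toEuclideanLin_apply] using h
  have hrepr : ∀ j, e.repr (L x) j = hH.eigenvalues j * e.repr x j := by
    intro j
    rw [e.repr_apply_apply, e.repr_apply_apply, ← hsym (e j) x, heig j,
      real_inner_smul_left]
  have hL : ⟪L x, x⟫ = ∑ j, hH.eigenvalues j * (e.repr x j) ^ 2 := by
    rw [← e.repr.inner_map_map (L x) x]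
    simp only [PiLp.inner_apply, RCLike.inner_apply, conj_trivial, hrepr]
    exact Finset.sum_congr rfl fun j _ => by ring
  have hx : ‖x‖ ^ 2 = ∑ j, (e.repr x j) ^ 2 := by
    rw [← real_inner_self_eq_norm_sq, ← e.repr.inner_map_map x x]
    simp only [PiLp.inner_apply, RCLike.inner_apply, conj_trivial]
    exact Finset.sum_congr rfl fun j _ => by ring
  constructor
  · rw [hL, hx, Finset.mul_sum]
    refine Finset.sum_le_sum fun j _ => ?_
    exact mul_le_mul_of_nonneg_right (ciInf_le (Set.Finite.bddBelow (Set.finite_range _)) j)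
      (sq_nonneg _)
  · rw [hL, hx, Finset.mul_sum]
    refine Finset.sum_le_sum fun j _ => ?_
    exact mul_le_mul_of_nonneg_right (le_ciSup (Set.Finite.bddAbove (Set.finite_range _)) j)
      (sq_nonneg _)

set_option maxHeartbeats 1600000 in
/-- If `A Aᵀ` is positive definite with eigenvalues `σ_i > 0` and
`ρ ≥ σ_max / σ_min`, then for nonzero `u, v`,
`cos ∠(Aᵀu, Aᵀv) ≥ ρ cos ∠(u, v) + 1 - ρ`. -/
theorem cos_angle_transpose_mul {m n : ℕ} (A : Matrix (Fin m) (Fin n) ℝ) (ρ : ℝ)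
    (hpd : (A * Aᵀ).PosDef) (hH : (A * Aᵀ).IsHermitian)
    (hρ : (⨆ i, hH.eigenvalues i) / (⨅ i, hH.eigenvalues i) ≤ ρ)
    (u v : EuclideanSpace ℝ (Fin m)) (hu : u ≠ 0) (hv : v ≠ 0) :
    ρ * Real.cos (angle u v) + 1 - ρ ≤
      Real.cos (angle (Matrix.toEuclideanLin Aᵀ u) (Matrix.toEuclideanLin Aᵀ v)) := by
  rcases Nat.eq_zero_or_pos m with hm | hm
  · subst hm
    exact absurd (Subsingleton.elim u 0) hu
  haveI : NeZero m := ⟨hm.ne'⟩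
  set σmin := ⨅ i, hH.eigenvalues i with hσmin
  set σmax := ⨆ i, hH.eigenvalues i with hσmax
  have hσmin_pos : 0 < σmin := by
    obtain ⟨i, hi⟩ := exists_eq_ciInf_of_finite (f := hH.eigenvalues)
    rw [hσmin, ← hi]
    exact hpd.eigenvalues_pos i
  have hminmax : σmin ≤ σmax := by
    refine le_trans (ciInf_le (Set.Finite.bddBelow (Set.finite_range _)) (Classical.arbitrary _))
      (le_ciSup (Set.Finite.bddAbove (Set.finite_range _)) _)
  have hρσ : σmax ≤ ρ * σmin := (div_le_iff₀ hσmin_pos).mp hρ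
  have hρ1 : 1 ≤ ρ := by
    nlinarith [hρσ, hminmax, hσmin_pos]
  set B := Matrix.toEuclideanLin Aᵀ with hBdef
  set L := Matrix.toEuclideanLin (A * Aᵀ) with hLdef
  -- key inner product identity
  have hBB : ∀ x : EuclideanSpace ℝ (Fin m), ⟪B x, B x⟫ = ⟪L x, x⟫ := by
    intro x
    have hAT : Aᵀ = Aᴴ := by
      ext i j
      simp [Matrix.conjTranspose_apply]
    have h1 : B = LinearMap.adjoint (Matrix.toEuclideanLin A) := by
      rw [hBdef, hAT, Matrix.toEuclideanLin_conjTranspose_eq_adjoint]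
    have h2 : Matrix.toEuclideanLin A (B x) = L x := by
      rw [hBdef, hLdef]
      simp [Matrix.toEuclideanLin_apply, Matrix.mulVec_mulVec]
    calc ⟪B x, B x⟫ = ⟪x, Matrix.toEuclideanLin A (B x)⟫ := by
          rw [h1, LinearMap.adjoint_inner_left, ← h1]
      _ = ⟪L x, x⟫ := by rw [h2, real_inner_comm]
  have hnormB : ∀ x : EuclideanSpace ℝ (Fin m), ‖B x‖ ^ 2 = ⟪L x, x⟫ := fun x => by
    rw [← real_inner_self_eq_norm_sq, hBB]
  -- normalize
  have hun : 0 < ‖u‖ := norm_pos_iff.mpr hu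
  have hvn : 0 < ‖v‖ := norm_pos_iff.mpr hv
  set u' : EuclideanSpace ℝ (Fin m) := ‖u‖⁻¹ • u with hu'def
  set v' : EuclideanSpace ℝ (Fin m) := ‖v‖⁻¹ • v with hv'def
  have hu'1 : ‖u'‖ = 1 := norm_smul_inv_norm hu
  have hv'1 : ‖v'‖ = 1 := norm_smul_inv_norm hv
  have hangle : angle u' v' = angle u v := by
    rw [hu'def, hv'def, angle_smul_left_of_pos _ _ (inv_pos.mpr hun),
      angle_smul_right_of_pos _ _ (inv_pos.mpr hvn)]
  have hBu' : B u' = ‖u‖⁻¹ • B u := by rw [hu'def]; exact B.map_smul _ u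
  have hBv' : B v' = ‖v‖⁻¹ • B v := by rw [hv'def]; exact B.map_smul _ v
  have hangleB : angle (B u') (B v') = angle (B u) (B v) := by
    rw [hBu', hBv', angle_smul_left_of_pos _ _ (inv_pos.mpr hun),
      angle_smul_right_of_pos _ _ (inv_pos.mpr hvn)]
  set a := B u' with hadef
  set b := B v' with hbdef
  set c0 : ℝ := ⟪u', v'⟫ with hc0def
  have hc0le : c0 ≤ 1 := by
    have := real_inner_le_norm u' v'
    rw [hu'1, hv'1] at this
    simpa using this
  -- quadratic bounds
  have ha2 : σmin ≤ ‖a‖ ^ 2 := by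
    have h := (rayleigh_bounds_aux hH u').1
    rw [hu'1] at h
    rw [hadef, hnormB u']
    simpa only [one_pow, mul_one] using h
  have hb2 : σmin ≤ ‖b‖ ^ 2 := by
    have h := (rayleigh_bounds_aux hH v').1
    rw [hv'1] at h
    rw [hbdef, hnormB v']
    simpa only [one_pow, mul_one] using h
  have hdiff : ‖a - b‖ ^ 2 ≤ σmax * (2 - 2 * c0) := by
    have h := (rayleigh_bounds_aux hH (u' - v')).2
    have hsub : a - b = B (u' - v') := by rw [hadef, hbdef, map_sub]
    have hnv : ‖u' - v'‖ ^ 2 = 2 - 2 * c0 := by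
      rw [norm_sub_sq_real, hu'1, hv'1, ← hc0def]; ring
    rw [hsub, hnormB (u' - v')]
    calc ⟪L (u' - v'), u' - v'⟫ ≤ σmax * ‖u' - v'‖ ^ 2 := h
      _ = σmax * (2 - 2 * c0) := by rw [hnv]
  have hapos : 0 < ‖a‖ := by
    have h2 : (0 : ℝ) < ‖a‖ ^ 2 := lt_of_lt_of_le hσmin_pos ha2
    nlinarith [norm_nonneg a]
  have hbpos : 0 < ‖b‖ := by
    have h2 : (0 : ℝ) < ‖b‖ ^ 2 := lt_of_lt_of_le hσmin_pos hb2
    nlinarith [norm_nonneg b]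
  have habmin : σmin ≤ ‖a‖ * ‖b‖ := by
    nlinarith [mul_le_mul ha2 hb2 hσmin_pos.le (sq_nonneg ‖a‖),
      mul_nonneg (norm_nonneg a) (norm_nonneg b), hσmin_pos]
  -- conclusion
  have hcosuv : Real.cos (angle u v) = c0 := by
    rw [← hangle, cos_angle, hu'1, hv'1, ← hc0def]
    norm_num
  rw [hcosuv, ← hangleB, cos_angle]
  rw [le_div_iff₀ (mul_pos hapos hbpos)]
  have hab2 : ‖a - b‖ ^ 2 = ‖a‖ ^ 2 - 2 * ⟪a, b⟫ + ‖b‖ ^ 2 := norm_sub_sq_real a b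
  nlinarith [hab2, hdiff, hρσ, habmin, hc0le, hρ1, hσmin_pos,
    sq_nonneg (‖a‖ - ‖b‖),
    mul_nonneg (mul_nonneg (by linarith : (0:ℝ) ≤ ρ) (by linarith : (0:ℝ) ≤ 1 - c0))
      (by linarith : (0:ℝ) ≤ ‖a‖ * ‖b‖ - σmin),
    mul_nonneg (sub_nonneg.mpr hρσ) (by linarith : (0:ℝ) ≤ 2 - 2 * c0)]
end

section
/- Let v ∈ ℝ^n and let k ∈ {0, 1, …, n}. Let S ⊆ {1, …, n} be a set of k indices of the k entries of v with largest absolute value (i.e., |v_i| ≥ |v_j| for every i ∈ S and j ∉ S). Then Σ_{i ∈ S} v_i² ≥ (k/n)·Σ_{i=1}^n v_i². Consequently, writing top_k(v) for the vector that agrees with v on S and is zero elsewhere, one has ⟪top_k(v), v⟫ = ‖top_k(v)‖², and if v ≠ 0 and top_k(v) ≠ 0 then cos ∠(top_k(v), v) = ‖top_k(v)‖/‖v‖ ≥ √(k/n); i.e., top_k is a sparsifying function with sparse ratio r = k/n. -/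
open InnerProductGeometry RealInnerProductSpace

/-- `top_k` is a sparsifying function with sparse ratio `k/n`: if `S` collects `k` indices
of entries of `v` with largest absolute value, then `∑_{i∈S} v_i² ≥ (k/n) ∑_i v_i²`;
moreover for the vector `t = top_k(v)` (agreeing with `v` on `S`, zero elsewhere),
`⟪t, v⟫ = ‖t‖²` and, when `v ≠ 0` and `t ≠ 0`,
`cos ∠(t, v) = ‖t‖/‖v‖ ≥ √(k/n)`. -/
theorem topk_sparsifying {n : ℕ} (v : EuclideanSpace ℝ (Fin n)) (k : ℕ) (hk : k ≤ n)
    (S : Finset (Fin n)) (hcard : S.card = k)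
    (hS : ∀ i ∈ S, ∀ j ∉ S, |v j| ≤ |v i|)
    (t : EuclideanSpace ℝ (Fin n)) (ht : ∀ i, t i = if i ∈ S then v i else 0) :
    ((k : ℝ) / (n : ℝ)) * ∑ i, (v i) ^ 2 ≤ ∑ i ∈ S, (v i) ^ 2 ∧
    ⟪t, v⟫ = ‖t‖ ^ 2 ∧
    (v ≠ 0 → t ≠ 0 →
      Real.cos (angle t v) = ‖t‖ / ‖v‖ ∧
      Real.sqrt ((k : ℝ) / (n : ℝ)) ≤ ‖t‖ / ‖v‖) := by
  have hsq : ∀ i ∈ S, ∀ j ∉ S, (v j) ^ 2 ≤ (v i) ^ 2 := by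
    intro i hi j hj
    have := hS i hi j hj
    nlinarith [abs_nonneg (v j), abs_nonneg (v i), sq_abs (v i), sq_abs (v j)]
  -- key inequality: k * ∑_{Sᶜ} ≤ (n-k) * ∑_S
  have hcardc : Sᶜ.card = n - k := by
    simp [Finset.card_compl, hcard]
  have key : (k : ℝ) * ∑ j ∈ Sᶜ, (v j) ^ 2 ≤ ((n - k : ℕ) : ℝ) * ∑ i ∈ S, (v i) ^ 2 := by
    have h1 : ∑ i ∈ S, ∑ j ∈ Sᶜ, (v j) ^ 2 ≤ ∑ i ∈ S, ∑ j ∈ Sᶜ, (v i) ^ 2 := by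
      apply Finset.sum_le_sum
      intro i hi
      apply Finset.sum_le_sum
      intro j hj
      exact hsq i hi j (Finset.mem_compl.mp hj)
    simpa [Finset.sum_const, hcard, hcardc, mul_comm, Finset.mul_sum] using h1
  have hsplit : ∑ i, (v i) ^ 2 = ∑ i ∈ S, (v i) ^ 2 + ∑ j ∈ Sᶜ, (v j) ^ 2 := by
    rw [Finset.sum_add_sum_compl]
  have part1 : ((k : ℝ) / (n : ℝ)) * ∑ i, (v i) ^ 2 ≤ ∑ i ∈ S, (v i) ^ 2 := by
    rcases Nat.eq_zero_or_pos n with hn | hn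
    · subst hn
      interval_cases k
      simp
      exact Finset.sum_nonneg fun i _ => sq_nonneg _
    · have hn' : (0 : ℝ) < n := by exact_mod_cast hn
      rw [div_mul_eq_mul_div, div_le_iff₀ hn']
      have hnk : ((n - k : ℕ) : ℝ) = (n : ℝ) - k := by
        push_cast [Nat.cast_sub hk]; ring
      rw [hsplit]
      rw [hnk] at key
      nlinarith [key]
  have hinner : ⟪t, v⟫ = ‖t‖ ^ 2 := by
    rw [← real_inner_self_eq_norm_sq]
    rw [PiLp.inner_apply, PiLp.inner_apply]
    apply Finset.sum_congr rfl
    intro i _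
    simp [ht i]
    split <;> simp [sq]
  refine ⟨part1, hinner, ?_⟩
  intro hv htne
  have hcos : Real.cos (angle t v) = ‖t‖ / ‖v‖ := by
    rw [cos_angle, hinner]
    have h1 : ‖t‖ ≠ 0 := norm_ne_zero_iff.mpr htne
    have h2 : ‖v‖ ≠ 0 := norm_ne_zero_iff.mpr hv
    field_simp
  refine ⟨hcos, ?_⟩
  have hts : ‖t‖ ^ 2 = ∑ i ∈ S, (v i) ^ 2 := by
    rw [← real_inner_self_eq_norm_sq, PiLp.inner_apply]
    rw [← Finset.sum_subset (Finset.subset_univ S)]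
    · apply Finset.sum_congr rfl; intro i hi; simp [ht i, hi, sq]
    · intro i _ hi; simp [ht i, hi]
  have hvs : ‖v‖ ^ 2 = ∑ i, (v i) ^ 2 := by
    rw [← real_inner_self_eq_norm_sq, PiLp.inner_apply]
    apply Finset.sum_congr rfl; intro i _; simp [sq]
  have hineq : ((k : ℝ) / (n : ℝ)) * ‖v‖ ^ 2 ≤ ‖t‖ ^ 2 := by
    rw [hvs, hts]; exact part1
  have hknn : (0 : ℝ) ≤ (k : ℝ) / (n : ℝ) := by positivity
  have h2 : Real.sqrt ((k : ℝ) / (n : ℝ)) * ‖v‖ ≤ ‖t‖ := by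
    have := Real.sqrt_le_sqrt hineq
    rwa [Real.sqrt_mul hknn, Real.sqrt_sq (norm_nonneg v), Real.sqrt_sq (norm_nonneg t)] at this
  rw [le_div_iff₀ (norm_pos_iff.mpr hv)]
  exact h2
end

section
/- Let d ∈ ℝ^m have all entries strictly positive, with d_min = min_i d_i and d_max = max_i d_i, and let ρ ≥ (d_max/d_min)² (so ρ ≥ 1). Then for any nonzero vectors u, v ∈ ℝ^m, cos ∠(d ⊙ u, d ⊙ v) ≥ ρ·cos ∠(u, v) + 1 − ρ, where ⊙ denotes the componentwise (Hadamard) product. -/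
open InnerProductGeometry

open scoped RealInnerProductSpace

lemma cos_angle_hadamard_aux {m : ℕ} (d : Fin m → ℝ) (L M ρ : ℝ) (hL : 0 < L)
    (hLd : ∀ i, L ≤ d i) (hdM : ∀ i, d i ≤ M) (hρ : (M / L) ^ 2 ≤ ρ)
    (u v du dv : EuclideanSpace ℝ (Fin m)) (hu : ‖u‖ = 1) (hv : ‖v‖ = 1)
    (hdu : ∀ i, du i = d i * u i) (hdv : ∀ i, dv i = d i * v i) :
    ρ * Real.cos (angle u v) + 1 - ρ ≤ Real.cos (angle du dv) := by
  have hd0 : ∀ i, (0:ℝ) ≤ d i := fun i => hL.le.trans (hLd i)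
  have normsq : ∀ x : EuclideanSpace ℝ (Fin m), ‖x‖ ^ 2 = ∑ i, x i ^ 2 := by
    intro x
    rw [EuclideanSpace.norm_eq, Real.sq_sqrt (Finset.sum_nonneg fun i _ => sq_nonneg _)]
    simp [sq_abs]
  have hinner : ∀ x y : EuclideanSpace ℝ (Fin m), (inner ℝ x y : ℝ) = ∑ i, x i * y i := by
    intro x y
    simp [PiLp.inner_apply, RCLike.inner_apply, conj_trivial, mul_comm]
  set p : ℝ := inner ℝ u v with hpdef
  set P : ℝ := inner ℝ du dv with hPdef
  set A := ‖du‖ with hAdef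
  set B := ‖dv‖ with hBdef
  have hA0 : 0 ≤ A := norm_nonneg _
  have hB0 : 0 ≤ B := norm_nonneg _
  have hu2 : ∑ i, u i ^ 2 = 1 := by rw [← normsq, hu]; norm_num
  have hv2 : ∑ i, v i ^ 2 = 1 := by rw [← normsq, hv]; norm_num
  have hA2 : L ^ 2 ≤ A ^ 2 := by
    rw [hAdef, normsq]
    calc L ^ 2 = ∑ i, L ^ 2 * u i ^ 2 := by rw [← Finset.mul_sum, hu2, mul_one]
      _ ≤ ∑ i, du i ^ 2 := by
          refine Finset.sum_le_sum fun i _ => ?_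
          rw [hdu, mul_pow]
          exact mul_le_mul_of_nonneg_right (pow_le_pow_left₀ hL.le (hLd i) 2) (sq_nonneg _)
  have hB2 : L ^ 2 ≤ B ^ 2 := by
    rw [hBdef, normsq]
    calc L ^ 2 = ∑ i, L ^ 2 * v i ^ 2 := by rw [← Finset.mul_sum, hv2, mul_one]
      _ ≤ ∑ i, dv i ^ 2 := by
          refine Finset.sum_le_sum fun i _ => ?_
          rw [hdv, mul_pow]
          exact mul_le_mul_of_nonneg_right (pow_le_pow_left₀ hL.le (hLd i) 2) (sq_nonneg _)
  have hA : L ≤ A := by nlinarith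
  have hB : L ≤ B := by nlinarith
  have hAB : L ^ 2 ≤ A * B := by nlinarith
  have hCS : P ≤ A * B := real_inner_le_norm du dv
  have hp1 : p ≤ 1 := by
    have := real_inner_le_norm u v
    rwa [hu, hv, one_mul] at this
  have h1 : A ^ 2 + B ^ 2 - 2 * P = ∑ i, d i ^ 2 * (u i - v i) ^ 2 := by
    rw [hAdef, hBdef, normsq, normsq, hPdef, hinner]
    have e1 : ∑ i, d i ^ 2 * (u i - v i) ^ 2
        = ∑ i, (du i ^ 2 + dv i ^ 2 - 2 * (du i * dv i)) := by
      refine Finset.sum_congr rfl fun i _ => ?_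
      rw [hdu, hdv]; ring
    rw [e1, Finset.sum_sub_distrib, Finset.sum_add_distrib, ← Finset.mul_sum]
  have h2 : (2:ℝ) - 2 * p = ∑ i, (u i - v i) ^ 2 := by
    have e1 : ∑ i, (u i - v i) ^ 2
        = ∑ i, (u i ^ 2 + v i ^ 2 - 2 * (u i * v i)) := by
      refine Finset.sum_congr rfl fun i _ => by ring
    rw [e1, Finset.sum_sub_distrib, Finset.sum_add_distrib, ← Finset.mul_sum, hu2, hv2,
      hpdef, hinner]
    ring
  have hkey : A ^ 2 + B ^ 2 - 2 * P ≤ M ^ 2 * (2 - 2 * p) := by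
    rw [h1, h2, Finset.mul_sum]
    exact Finset.sum_le_sum fun i _ =>
      mul_le_mul_of_nonneg_right (pow_le_pow_left₀ (hd0 i) (hdM i) 2) (sq_nonneg _)
  have hkey2 : A * B - P ≤ M ^ 2 * (1 - p) := by nlinarith [sq_nonneg (A - B)]
  have hρ0 : 0 ≤ ρ := le_trans (sq_nonneg _) hρ
  have hABpos : (0:ℝ) < A * B := lt_of_lt_of_le (by positivity) hAB
  rw [cos_angle, cos_angle, hu, hv, one_mul, div_one, ← hpdef, ← hPdef, ← hAdef, ← hBdef]
  have h3 : 1 - P / (A * B) ≤ ρ * (1 - p) := by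
    have e : 1 - P / (A * B) = (A * B - P) / (A * B) := by rw [sub_div, div_self hABpos.ne']
    rw [e]
    calc (A * B - P) / (A * B) ≤ (M ^ 2 * (1 - p)) / L ^ 2 := by
          exact div_le_div₀ (mul_nonneg (sq_nonneg M) (by linarith)) hkey2 (by positivity) hAB
      _ = (M / L) ^ 2 * (1 - p) := by field_simp
      _ ≤ ρ * (1 - p) := mul_le_mul_of_nonneg_right hρ (by linarith)
  rw [mul_sub, mul_one] at h3
  linarith

/-- If `d` has strictly positive entries and `ρ ≥ (d_max/d_min)²`, then for nonzero
`u, v`, `cos ∠(d ⊙ u, d ⊙ v) ≥ ρ cos ∠(u, v) + 1 - ρ`, where `⊙` is the componentwise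
product. -/
theorem cos_angle_hadamard {m : ℕ} (d : Fin m → ℝ) (hd : ∀ i, 0 < d i) (ρ : ℝ)
    (hρ : ((⨆ i, d i) / (⨅ i, d i)) ^ 2 ≤ ρ)
    (u v du dv : EuclideanSpace ℝ (Fin m)) (hu : u ≠ 0) (hv : v ≠ 0)
    (hdu : ∀ i, du i = d i * u i) (hdv : ∀ i, dv i = d i * v i) :
    ρ * Real.cos (angle u v) + 1 - ρ ≤ Real.cos (angle du dv) := by
  rcases Nat.eq_zero_or_pos m with hm | hm
  · subst hm
    exact absurd (Subsingleton.elim u 0) hu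
  haveI : Nonempty (Fin m) := ⟨⟨0, hm⟩⟩
  have hLd : ∀ i, (⨅ j, d j) ≤ d i := fun i => ciInf_le (Set.finite_range d).bddBelow i
  have hdM : ∀ i, d i ≤ ⨆ j, d j := fun i => le_ciSup (Set.finite_range d).bddAbove i
  have hL : 0 < ⨅ j, d j := by
    obtain ⟨i, hi⟩ := Finite.exists_min d
    exact lt_of_lt_of_le (hd i) (le_ciInf hi)
  have ha : (0:ℝ) < ‖u‖ := norm_pos_iff.mpr hu
  have hb : (0:ℝ) < ‖v‖ := norm_pos_iff.mpr hv
  have hang : angle u v = angle (‖u‖⁻¹ • u) (‖v‖⁻¹ • v) := by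
    rw [angle_smul_left_of_pos _ _ (inv_pos.mpr ha), angle_smul_right_of_pos _ _ (inv_pos.mpr hb)]
  have hang2 : angle du dv = angle (‖u‖⁻¹ • du) (‖v‖⁻¹ • dv) := by
    rw [angle_smul_left_of_pos _ _ (inv_pos.mpr ha), angle_smul_right_of_pos _ _ (inv_pos.mpr hb)]
  rw [hang, hang2]
  refine cos_angle_hadamard_aux d _ _ ρ hL hLd hdM hρ _ _ _ _
    (norm_smul_inv_norm hu) (norm_smul_inv_norm hv) ?_ ?_
  · intro i
    have : (‖u‖⁻¹ • du) i = ‖u‖⁻¹ * du i := rfl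
    rw [this, hdu i]
    have : (‖u‖⁻¹ • u) i = ‖u‖⁻¹ * u i := rfl
    rw [this]; ring
  · intro i
    have : (‖v‖⁻¹ • dv) i = ‖v‖⁻¹ * dv i := rfl
    rw [this, hdv i]
    have : (‖v‖⁻¹ • v) i = ‖v‖⁻¹ * v i := rfl
    rw [this]; ring
end

section
/- Let W be a real m × n matrix such that W·Wᵀ is positive definite with eigenvalues s_1, …, s_m > 0, let ρ₁ ≥ (max_i s_i)/(min_i s_i), and let g, t ∈ ℝ^m be nonzero vectors (the estimated and true gradients of h = Wx). If ρ₁·cos ∠(g, t) + 1 − ρ₁ > 0, then the gradient estimation angle of the layer input satisfies ∠(Wᵀg, Wᵀt) ≤ arccos(ρ₁·cos ∠(g, t) + 1 − ρ₁). -/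
open InnerProductGeometry Matrix
open scoped RealInnerProductSpace

set_option maxHeartbeats 1000000 in
/-- Bound on the gradient estimation angle of the layer input: if `W Wᵀ` is positive
definite with eigenvalues `s_i > 0`, `ρ₁ ≥ s_max/s_min`, and
`ρ₁ cos ∠(g,t) + 1 - ρ₁ > 0`, then
`∠(Wᵀg, Wᵀt) ≤ arccos(ρ₁ cos ∠(g,t) + 1 - ρ₁)`. -/
theorem sparse_bp_input_angle {m n : ℕ} (W : Matrix (Fin m) (Fin n) ℝ) (ρ₁ : ℝ)
    (hpd : (W * Wᵀ).PosDef) (hH : (W * Wᵀ).IsHermitian)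
    (hρ : (⨆ i, hH.eigenvalues i) / (⨅ i, hH.eigenvalues i) ≤ ρ₁)
    (g t : EuclideanSpace ℝ (Fin m)) (hg : g ≠ 0) (ht : t ≠ 0)
    (hpos : 0 < ρ₁ * Real.cos (angle g t) + 1 - ρ₁) :
    angle (Matrix.toEuclideanLin Wᵀ g) (Matrix.toEuclideanLin Wᵀ t) ≤
      Real.arccos (ρ₁ * Real.cos (angle g t) + 1 - ρ₁) := by
  classical
  have hne : Nonempty (Fin m) := by
    rcases isEmpty_or_nonempty (Fin m) with h | h
    · exact absurd (Subsingleton.elim g 0) hg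
    · exact h
  set s : Fin m → ℝ := hH.eigenvalues with hs
  set smax := ⨆ i, s i with hsmax
  set smin := ⨅ i, s i with hsmin
  have hspos : ∀ i, 0 < s i := fun i => hpd.eigenvalues_pos i
  have hb_above : ∀ i, s i ≤ smax := fun i =>
    le_ciSup (Set.Finite.bddAbove (Set.finite_range s)) i
  have hb_below : ∀ i, smin ≤ s i := fun i =>
    ciInf_le (Set.Finite.bddBelow (Set.finite_range s)) i
  have hsminpos : 0 < smin := by
    obtain ⟨i0, hi0⟩ := Finite.exists_min s
    exact lt_of_lt_of_le (hspos i0) (le_ciInf hi0)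
  have hsminmax : smin ≤ smax := le_trans (hb_below hne.some) (hb_above hne.some)
  have hρ1 : 1 ≤ ρ₁ := le_trans ((one_le_div hsminpos).2 hsminmax) hρ
  have hsmaxle : smax ≤ ρ₁ * smin := (div_le_iff₀ hsminpos).1 hρ
  set f := Matrix.toEuclideanLin Wᵀ with hf
  set L := Matrix.toEuclideanLin (W * Wᵀ) with hL
  have hcomp : ∀ x, Matrix.toEuclideanLin W (f x) = L x := by
    intro x
    simp [hf, hL, toEuclideanLin_apply, Matrix.mulVec_mulVec]
  have hadj : ∀ x y : EuclideanSpace ℝ (Fin m), ⟪f x, f y⟫ = ⟪x, L y⟫ := by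
    intro x y
    have h1 : LinearMap.adjoint f = Matrix.toEuclideanLin W := by
      rw [hf, ← Matrix.toEuclideanLin_conjTranspose_eq_adjoint,
        conjTranspose_eq_transpose_of_trivial, transpose_transpose]
    calc ⟪f x, f y⟫ = ⟪x, LinearMap.adjoint f (f y)⟫ :=
          (LinearMap.adjoint_inner_right f x (f y)).symm
      _ = ⟪x, L y⟫ := by rw [h1, hcomp]
  set b := hH.eigenvectorBasis with hb
  have hsym : L.IsSymmetric := isHermitian_iff_isSymmetric.1 hH
  have hLb : ∀ i, L (b i) = s i • b i := by
    intro i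
    have h2 := hH.mulVec_eigenvectorBasis i
    apply_fun (WithLp.equiv 2 (Fin m → ℝ)).symm at h2
    simpa [hL, hb, toEuclideanLin_apply] using h2
  have hrepr : ∀ (x : EuclideanSpace ℝ (Fin m)) i, b.repr (L x) i = s i * b.repr x i := by
    intro x i
    rw [b.repr_apply_apply, b.repr_apply_apply, ← hsym (b i) x, hLb i,
      real_inner_smul_left]
  have hinner : ∀ x : EuclideanSpace ℝ (Fin m), ⟪x, L x⟫ = ∑ i, s i * (b.repr x i) ^ 2 := by
    intro x
    rw [← b.repr.inner_map_map x (L x), PiLp.inner_apply]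
    refine Finset.sum_congr rfl fun i _ => ?_
    rw [hrepr x i]
    simp [RCLike.inner_apply]
    ring
  have hnorm : ∀ x : EuclideanSpace ℝ (Fin m), ‖x‖ ^ 2 = ∑ i, (b.repr x i) ^ 2 := by
    intro x
    rw [← real_inner_self_eq_norm_sq, ← b.repr.inner_map_map x x, PiLp.inner_apply]
    refine Finset.sum_congr rfl fun i _ => ?_
    simp [RCLike.inner_apply, sq]
  have hub : ∀ x : EuclideanSpace ℝ (Fin m), ⟪x, L x⟫ ≤ smax * ‖x‖ ^ 2 := by
    intro x
    rw [hinner, hnorm, Finset.mul_sum]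
    exact Finset.sum_le_sum fun i _ => mul_le_mul_of_nonneg_right (hb_above i) (sq_nonneg _)
  have hlb : ∀ x : EuclideanSpace ℝ (Fin m), smin * ‖x‖ ^ 2 ≤ ⟪x, L x⟫ := by
    intro x
    rw [hinner, hnorm, Finset.mul_sum]
    exact Finset.sum_le_sum fun i _ => mul_le_mul_of_nonneg_right (hb_below i) (sq_nonneg _)
  have hfx : ∀ x : EuclideanSpace ℝ (Fin m), ‖f x‖ ^ 2 = ⟪x, L x⟫ := by
    intro x
    rw [← real_inner_self_eq_norm_sq, hadj]
  -- unit vectors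
  set u := ‖g‖⁻¹ • g with hu
  set v := ‖t‖⁻¹ • t with hv
  have hgpos : (0:ℝ) < ‖g‖ := norm_pos_iff.2 hg
  have htpos : (0:ℝ) < ‖t‖ := norm_pos_iff.2 ht
  have hu1 : ‖u‖ = 1 := norm_smul_inv_norm (𝕜 := ℝ) hg
  have hv1 : ‖v‖ = 1 := norm_smul_inv_norm (𝕜 := ℝ) ht
  have hθ : angle u v = angle g t := by
    rw [hu, hv, angle_smul_left_of_pos _ _ (inv_pos.2 hgpos),
      angle_smul_right_of_pos _ _ (inv_pos.2 htpos)]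
  have hfang : angle (f g) (f t) = angle (f u) (f v) := by
    have h1 : f u = ‖g‖⁻¹ • f g := by exact f.map_smul _ _
    have h2 : f v = ‖t‖⁻¹ • f t := by exact f.map_smul _ _
    rw [h1, h2, angle_smul_left_of_pos _ _ (inv_pos.2 hgpos),
      angle_smul_right_of_pos _ _ (inv_pos.2 htpos)]
  set θc := Real.cos (angle g t) with hθc
  have hθc1 : θc ≤ 1 := Real.cos_le_one _
  have huv : ⟪u, v⟫ = θc := by
    have := cos_angle u v
    rw [hθ, hu1, hv1] at this
    rw [hθc, this]; ring
  have hsub : ‖u - v‖ ^ 2 = 2 - 2 * θc := by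
    rw [norm_sub_sq_real, hu1, hv1, huv]; ring
  set na := ‖f u‖ with hna
  set nb := ‖f v‖ with hnb
  have hna2 : smin ≤ na ^ 2 := by
    have h3 := hlb u
    rw [hu1] at h3
    rw [hna, hfx u]
    simpa using h3
  have hnb2 : smin ≤ nb ^ 2 := by
    have h3 := hlb v
    rw [hv1] at h3
    rw [hnb, hfx v]
    simpa using h3
  have hnan : 0 ≤ na := norm_nonneg _
  have hnbn : 0 ≤ nb := norm_nonneg _
  have hprod : smin ≤ na * nb := by
    have h4 : smin ^ 2 ≤ (na * nb) ^ 2 := by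
      nlinarith [mul_le_mul hna2 hnb2 hsminpos.le (sq_nonneg na)]
    have h5 := Real.sqrt_le_sqrt h4
    rwa [Real.sqrt_sq hsminpos.le, Real.sqrt_sq (mul_nonneg hnan hnbn)] at h5
  have hprodpos : 0 < na * nb := lt_of_lt_of_le hsminpos hprod
  have hdiff : ‖f u - f v‖ ^ 2 ≤ smax * (2 - 2 * θc) := by
    rw [← map_sub]
    calc ‖f (u - v)‖ ^ 2 = ⟪u - v, L (u - v)⟫ := hfx _
      _ ≤ smax * ‖u - v‖ ^ 2 := hub _
      _ = smax * (2 - 2 * θc) := by rw [hsub]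
  have hip : na * nb - ⟪f u, f v⟫ ≤ smax * (1 - θc) := by
    have hexp : ‖f u - f v‖ ^ 2 = na ^ 2 - 2 * ⟪f u, f v⟫ + nb ^ 2 := norm_sub_sq_real _ _
    nlinarith [sq_nonneg (na - nb)]
  have hc_le : ρ₁ * θc + 1 - ρ₁ ≤ Real.cos (angle (f g) (f t)) := by
    rw [hfang, cos_angle, ← hna, ← hnb, le_div_iff₀ hprodpos]
    have h1 : smax * (1 - θc) ≤ ρ₁ * smin * (1 - θc) :=
      mul_le_mul_of_nonneg_right hsmaxle (by linarith)
    have h2 : ρ₁ * smin * (1 - θc) ≤ ρ₁ * (na * nb) * (1 - θc) :=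
      mul_le_mul_of_nonneg_right
        (mul_le_mul_of_nonneg_left hprod (by linarith)) (by linarith)
    nlinarith
  calc angle (f g) (f t)
      = Real.arccos (Real.cos (angle (f g) (f t))) :=
        (Real.arccos_cos (angle_nonneg _ _) (angle_le_pi _ _)).symm
    _ ≤ Real.arccos (ρ₁ * θc + 1 - ρ₁) := by
        rw [Real.arccos_eq_pi_div_two_sub_arcsin, Real.arccos_eq_pi_div_two_sub_arcsin]
        have := Real.monotone_arcsin hc_le
        linarith
end

section
/- Let u_1, …, u_N and v_1, …, v_N be nonzero vectors with u_i, v_i ∈ ℝ^{n_i}, and set λ_i = ‖u_i‖/‖v_i‖. Let U = (u_1, …, u_N) and G = (λ_1 v_1, …, λ_N v_N) be their concatenations in ℝ^{n_1 + ⋯ + n_N}. Then ‖G‖ = ‖U‖ and cos ∠(G, U) ≥ min_{1 ≤ i ≤ N} cos ∠(v_i, u_i); equivalently, ∠(G, U) ≤ max_i ∠(v_i, u_i). -/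
open InnerProductGeometry
open scoped RealInnerProductSpace

/-- Concatenating the rescaled per-layer estimated gradients `λ_i • v_i` with
`λ_i = ‖u_i‖/‖v_i‖` yields a vector `G` with `‖G‖ = ‖U‖`, whose angle with the
concatenation `U` of the true per-layer gradients satisfies
`cos ∠(G, U) ≥ min_i cos ∠(v_i, u_i)`, i.e. `∠(G, U) ≤ max_i ∠(v_i, u_i)`. -/
theorem concat_rescaled_angle {N : ℕ} (hN : 0 < N) (n : Fin N → ℕ)
    (u v : PiLp 2 fun i : Fin N => EuclideanSpace ℝ (Fin (n i)))
    (hu : ∀ i, u i ≠ 0) (hv : ∀ i, v i ≠ 0)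
    (G : PiLp 2 fun i : Fin N => EuclideanSpace ℝ (Fin (n i)))
    (hG : ∀ i, G i = (‖u i‖ / ‖v i‖) • v i) :
    ‖G‖ = ‖u‖ ∧
    (⨅ i, Real.cos (angle (v i) (u i))) ≤ Real.cos (angle G u) ∧
    angle G u ≤ ⨆ i, angle (v i) (u i) := by
  have hNe : Nonempty (Fin N) := ⟨⟨0, hN⟩⟩
  have hvn : ∀ i, (0:ℝ) < ‖v i‖ := fun i => norm_pos_iff.mpr (hv i)
  have hun : ∀ i, (0:ℝ) < ‖u i‖ := fun i => norm_pos_iff.mpr (hu i)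
  have hGi : ∀ i, ‖G i‖ = ‖u i‖ := by
    intro i
    rw [hG i, norm_smul, Real.norm_eq_abs, abs_of_nonneg (by positivity),
      div_mul_cancel₀ _ (hvn i).ne']
  have hGnorm : ‖G‖ = ‖u‖ := by
    have h1 := PiLp.norm_sq_eq_of_L2 _ G
    have h2 := PiLp.norm_sq_eq_of_L2 _ u
    have : ‖G‖ ^ 2 = ‖u‖ ^ 2 := by
      rw [h1, h2]
      exact Finset.sum_congr rfl fun i _ => by rw [hGi i]
    nlinarith [norm_nonneg G, norm_nonneg u]
  have hune : u ≠ 0 := fun h => hu ⟨0, hN⟩ (by simp [h])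
  have hupos : (0:ℝ) < ‖u‖ := norm_pos_iff.mpr hune
  have hinner : ∀ i, (inner ℝ (G i) (u i) : ℝ) = Real.cos (angle (v i) (u i)) * ‖u i‖ ^ 2 := by
    intro i
    have hc := cos_angle (v i) (u i)
    rw [hG i, real_inner_smul_left]
    field_simp [hc, (hvn i).ne', (hun i).ne']
    rw [hc]; field_simp [(hvn i).ne', (hun i).ne']
  have hGu : (inner ℝ (G) (u) : ℝ) = ∑ i, Real.cos (angle (v i) (u i)) * ‖u i‖ ^ 2 := by
    rw [PiLp.inner_apply]
    exact Finset.sum_congr rfl fun i _ => hinner i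
  set c := ⨅ i, Real.cos (angle (v i) (u i)) with hc
  have hbdd : BddBelow (Set.range fun i => Real.cos (angle (v i) (u i))) :=
    (Set.finite_range _).bddBelow
  have hcle : ∀ i, c ≤ Real.cos (angle (v i) (u i)) := fun i => ciInf_le hbdd i
  have hsum : c * ‖u‖ ^ 2 ≤ (inner ℝ (G) (u) : ℝ) := by
    rw [hGu, PiLp.norm_sq_eq_of_L2, Finset.mul_sum]
    exact Finset.sum_le_sum fun i _ =>
      mul_le_mul_of_nonneg_right (hcle i) (by positivity)
  have hcos : c ≤ Real.cos (angle G u) := by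
    rw [cos_angle, hGnorm]
    rw [le_div_iff₀ (by positivity)]
    calc c * (‖u‖ * ‖u‖) = c * ‖u‖ ^ 2 := by ring
      _ ≤ (inner ℝ (G) (u) : ℝ) := hsum
  refine ⟨hGnorm, hcos, ?_⟩
  obtain ⟨i1, hi1⟩ := Finite.exists_max fun i => angle (v i) (u i)
  have hsup : angle (v i1) (u i1) ≤ ⨆ i, angle (v i) (u i) :=
    le_ciSup (f := fun i => angle (v i) (u i)) (Set.finite_range _).bddAbove i1
  refine le_trans ?_ hsup
  have hci1 : Real.cos (angle (v i1) (u i1)) ≤ Real.cos (angle G u) := by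
    refine le_trans ?_ hcos
    exact le_ciInf fun j => Real.cos_le_cos_of_nonneg_of_le_pi (angle_nonneg _ _)
      (angle_le_pi _ _) (hi1 j)
  by_contra hlt
  push_neg at hlt
  have := Real.strictAntiOn_cos ⟨angle_nonneg (v i1) (u i1), angle_le_pi _ _⟩
    ⟨angle_nonneg G u, angle_le_pi G u⟩ hlt
  linarith
end

section
/- Let θ ∈ (0, π/2), and let u_1, …, u_n and v_1, …, v_n be nonzero vectors in ℝ^d with ‖u_i‖ = ‖v_i‖ and ∠(u_i, v_i) < θ for all i. Let ū = (1/n)·Σ_i u_i and v̄ = (1/n)·Σ_i v_i, assume ū ≠ 0 and v̄ ≠ 0, and set β = (Σ_{i=1}^n ‖u_i‖)/(n·‖ū‖) (note β ≥ 1). If cos θ − √(β² − 1)·sin θ > 0, then cos ∠(ū, v̄) > (cos θ − √(β² − 1)·sin θ) / (1 + 2β·sin(θ/2)). -/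
open InnerProductGeometry

open scoped RealInnerProductSpace

section Spherical

variable {V : Type*} [NormedAddCommGroup V] [InnerProductSpace ℝ V]

/-- Spherical law of cosines lower bound:
`cos ∠(a,c) ≥ cos ∠(a,b) cos ∠(b,c) - sin ∠(a,b) sin ∠(b,c)`. -/
theorem cos_angle_ge_aux (a b c : V) :
    Real.cos (angle a b) * Real.cos (angle b c) -
      Real.sin (angle a b) * Real.sin (angle b c) ≤ Real.cos (angle a c) := by
  by_cases ha : a = 0
  · have h1 : Real.sin (angle b c) ≥ 0 :=
      Real.sin_nonneg_of_nonneg_of_le_pi (angle_nonneg _ _) (angle_le_pi _ _)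
    have h2 : Real.cos (angle b c) ≤ 1 := Real.cos_le_one _
    simp only [ha, angle_zero_left, Real.cos_pi_div_two, Real.sin_pi_div_two]
    nlinarith
  by_cases hc : c = 0
  · have h1 : Real.sin (angle a b) ≥ 0 :=
      Real.sin_nonneg_of_nonneg_of_le_pi (angle_nonneg _ _) (angle_le_pi _ _)
    simp only [hc, angle_zero_right, Real.cos_pi_div_two, Real.sin_pi_div_two]
    nlinarith
  by_cases hb : b = 0
  · simp only [hb, angle_zero_left, angle_zero_right, Real.cos_pi_div_two,
      Real.sin_pi_div_two]
    have := Real.neg_one_le_cos (angle a c)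
    nlinarith
  have hA : 0 < ‖a‖ := norm_pos_iff.mpr ha
  have hB : 0 < ‖b‖ := norm_pos_iff.mpr hb
  have hC : 0 < ‖c‖ := norm_pos_iff.mpr hc
  have hbb : ⟪b, b⟫ = ‖b‖ * ‖b‖ := real_inner_self_eq_norm_mul_norm b
  have hbbpos : (0:ℝ) < ⟪b, b⟫ := by rw [hbb]; positivity
  have hX0 : (0:ℝ) ≤ ⟪a, a⟫ * ⟪b, b⟫ - ⟪a, b⟫ * ⟪a, b⟫ := by
    have := real_inner_mul_inner_self_le a b
    nlinarith
  have hY0 : (0:ℝ) ≤ ⟪b, b⟫ * ⟪c, c⟫ - ⟪b, c⟫ * ⟪b, c⟫ := by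
    have := real_inner_mul_inner_self_le b c
    nlinarith
  -- Cauchy–Schwarz on projections orthogonal to b
  have key : ⟪a, b⟫ * ⟪b, c⟫ - ⟪b, b⟫ * ⟪a, c⟫ ≤
      Real.sqrt (⟪a, a⟫ * ⟪b, b⟫ - ⟪a, b⟫ * ⟪a, b⟫) *
        Real.sqrt (⟪b, b⟫ * ⟪c, c⟫ - ⟪b, c⟫ * ⟪b, c⟫) := by
    have hcs := real_inner_mul_inner_self_le
      (⟪b, b⟫ • a - ⟪a, b⟫ • b) (⟪b, b⟫ • c - ⟪b, c⟫ • b)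
    have e1 : ⟪⟪b, b⟫ • a - ⟪a, b⟫ • b, ⟪b, b⟫ • c - ⟪b, c⟫ • b⟫ =
        ⟪b, b⟫ * (⟪b, b⟫ * ⟪a, c⟫ - ⟪a, b⟫ * ⟪b, c⟫) := by
      simp only [inner_sub_left, inner_sub_right, real_inner_smul_left, real_inner_smul_right,
        real_inner_comm b a, real_inner_comm c b, real_inner_comm c a]
      ring
    have e2 : ⟪⟪b, b⟫ • a - ⟪a, b⟫ • b, ⟪b, b⟫ • a - ⟪a, b⟫ • b⟫ =
        ⟪b, b⟫ * (⟪a, a⟫ * ⟪b, b⟫ - ⟪a, b⟫ * ⟪a, b⟫) := by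
      simp only [inner_sub_left, inner_sub_right, real_inner_smul_left, real_inner_smul_right,
        real_inner_comm b a]
      ring
    have e3 : ⟪⟪b, b⟫ • c - ⟪b, c⟫ • b, ⟪b, b⟫ • c - ⟪b, c⟫ • b⟫ =
        ⟪b, b⟫ * (⟪b, b⟫ * ⟪c, c⟫ - ⟪b, c⟫ * ⟪b, c⟫) := by
      simp only [inner_sub_left, inner_sub_right, real_inner_smul_left, real_inner_smul_right,
        real_inner_comm c b]
      ring
    rw [e1, e2, e3] at hcs
    have hsq : (⟪b, b⟫ * ⟪a, c⟫ - ⟪a, b⟫ * ⟪b, c⟫) ^ 2 ≤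
        (⟪a, a⟫ * ⟪b, b⟫ - ⟪a, b⟫ * ⟪a, b⟫) * (⟪b, b⟫ * ⟪c, c⟫ - ⟪b, c⟫ * ⟪b, c⟫) := by
      have h2 : (⟪b, b⟫ * ⟪b, b⟫) * ((⟪b, b⟫ * ⟪a, c⟫ - ⟪a, b⟫ * ⟪b, c⟫) ^ 2) ≤
          (⟪b, b⟫ * ⟪b, b⟫) * ((⟪a, a⟫ * ⟪b, b⟫ - ⟪a, b⟫ * ⟪a, b⟫) *
            (⟪b, b⟫ * ⟪c, c⟫ - ⟪b, c⟫ * ⟪b, c⟫)) := by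
        calc (⟪b, b⟫ * ⟪b, b⟫) * ((⟪b, b⟫ * ⟪a, c⟫ - ⟪a, b⟫ * ⟪b, c⟫) ^ 2)
            = ⟪b, b⟫ * (⟪b, b⟫ * ⟪a, c⟫ - ⟪a, b⟫ * ⟪b, c⟫) *
              (⟪b, b⟫ * (⟪b, b⟫ * ⟪a, c⟫ - ⟪a, b⟫ * ⟪b, c⟫)) := by ring
          _ ≤ ⟪b, b⟫ * (⟪a, a⟫ * ⟪b, b⟫ - ⟪a, b⟫ * ⟪a, b⟫) *
              (⟪b, b⟫ * (⟪b, b⟫ * ⟪c, c⟫ - ⟪b, c⟫ * ⟪b, c⟫)) := hcs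
          _ = _ := by ring
      exact le_of_mul_le_mul_left h2 (by positivity)
    rcases le_or_gt (⟪a, b⟫ * ⟪b, c⟫ - ⟪b, b⟫ * ⟪a, c⟫) 0 with h | h
    · exact h.trans (by positivity)
    · rw [← Real.sqrt_mul hX0]
      exact Real.le_sqrt_of_sq_le (by nlinarith)
  have hca := cos_angle_mul_norm_mul_norm a b
  have hcb := cos_angle_mul_norm_mul_norm b c
  have hcc := cos_angle_mul_norm_mul_norm a c
  have hsa := sin_angle_mul_norm_mul_norm a b
  have hsb := sin_angle_mul_norm_mul_norm b c
  -- multiply the goal through by the (positive) product of norms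
  have hABC : 0 < ‖a‖ * ‖b‖ * (‖b‖ * ‖c‖) := by positivity
  rw [← sub_nonneg]
  have expand : Real.cos (angle a c) -
      (Real.cos (angle a b) * Real.cos (angle b c) -
        Real.sin (angle a b) * Real.sin (angle b c)) =
      (Real.cos (angle a c) * (‖a‖ * ‖c‖) * ⟪b, b⟫ -
        (Real.cos (angle a b) * (‖a‖ * ‖b‖) * (Real.cos (angle b c) * (‖b‖ * ‖c‖)) -
          Real.sin (angle a b) * (‖a‖ * ‖b‖) * (Real.sin (angle b c) * (‖b‖ * ‖c‖)))) /
        (‖a‖ * ‖b‖ * (‖b‖ * ‖c‖)) := by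
    rw [hbb]; field_simp
  rw [expand]
  apply div_nonneg _ hABC.le
  rw [hca, hcb, hcc, hsa, hsb]
  nlinarith [key]

end Spherical

set_option maxHeartbeats 1000000 in
/-- Scalar core inequality: if `cos α cos t - sin α sin t ≤ z`, `-1 ≤ z`,
`0 ≤ t ≤ θ < π/2`, then `R cos θ cos α - sin θ (β - cos α) ≤ R z`. -/
theorem scalar_core {θ α t R β z : ℝ} (hθ0 : 0 < θ) (hθπ : θ < Real.pi)
    (hsinθ : 0 < Real.sin θ) (hcosθ : 0 < Real.cos θ)
    (hα0 : 0 ≤ α) (hαπ : α ≤ Real.pi) (ht0 : 0 ≤ t) (htθ : t ≤ θ)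
    (hβ1 : 1 ≤ β) (hR0 : 0 ≤ R) (hR2 : R ^ 2 = β ^ 2 - 1)
    (hz1 : -1 ≤ z)
    (hz : Real.cos α * Real.cos t - Real.sin α * Real.sin t ≤ z) :
    R * Real.cos θ * Real.cos α - Real.sin θ * (β - Real.cos α) ≤ R * z := by
  have hsα : 0 ≤ Real.sin α := Real.sin_nonneg_of_nonneg_of_le_pi hα0 hαπ
  have hsc := Real.sin_sq_add_cos_sq α
  have hcα1 : Real.cos α ≤ 1 := Real.cos_le_one α
  have hcα1' : -1 ≤ Real.cos α := Real.neg_one_le_cos α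
  have hRβ : R ≤ β := by nlinarith
  have hsinθ1 : Real.sin θ ≤ 1 := Real.sin_le_one θ
  have hsR : R * Real.sin α ≤ β - Real.cos α := by
    nlinarith [sq_nonneg (β * Real.cos α - 1), mul_nonneg hR0 hsα]
  by_cases hcase : α + θ ≤ Real.pi
  · have h1 : Real.cos (α + θ) ≤ Real.cos (α + t) :=
      Real.cos_le_cos_of_nonneg_of_le_pi (by linarith) hcase (by linarith)
    rw [Real.cos_add, Real.cos_add] at h1
    have h2 : R * (Real.cos α * Real.cos θ - Real.sin α * Real.sin θ) ≤ R * z :=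
      mul_le_mul_of_nonneg_left (h1.trans hz) hR0
    have h3 : R * Real.sin α * Real.sin θ ≤ (β - Real.cos α) * Real.sin θ :=
      mul_le_mul_of_nonneg_right hsR hsinθ.le
    nlinarith [h2, h3, hsinθ, hR0]
  · have hcα : Real.cos α ≤ -Real.cos θ := by
      have h1 : Real.pi - θ ≤ α := by linarith
      have h2 := Real.cos_le_cos_of_nonneg_of_le_pi (by linarith) hαπ h1
      rw [Real.cos_pi_sub] at h2
      linarith
    have hsinsq : Real.sin θ ^ 2 = 1 - Real.cos θ ^ 2 := Real.sin_sq θ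
    have hmain : R * (1 + Real.cos α * Real.cos θ) ≤ Real.sin θ * (β - Real.cos α) := by
      have t1 : Real.cos α * Real.cos θ ≤ -Real.cos θ * Real.cos θ :=
        mul_le_mul_of_nonneg_right hcα hcosθ.le
      have s1 : 1 + Real.cos α * Real.cos θ ≤ Real.sin θ ^ 2 := by
        rw [hsinsq]; nlinarith [t1]
      have s2 : R * (1 + Real.cos α * Real.cos θ) ≤ R * Real.sin θ ^ 2 :=
        mul_le_mul_of_nonneg_left s1 hR0
      have s3 : R * Real.sin θ ^ 2 ≤ R * Real.sin θ := by
        nlinarith [mul_nonneg (mul_nonneg hR0 hsinθ.le) (sub_nonneg.mpr hsinθ1)]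
      have s4 : R * Real.sin θ ≤ β * Real.sin θ :=
        mul_le_mul_of_nonneg_right hRβ hsinθ.le
      have hcα0 : Real.cos α ≤ 0 := by linarith
      have s6 : Real.cos α * Real.sin θ ≤ 0 :=
        mul_nonpos_iff.mpr (Or.inr ⟨hcα0, hsinθ.le⟩)
      have s5 : β * Real.sin θ ≤ (β - Real.cos α) * Real.sin θ := by
        nlinarith [s6]
      linarith only [s2, s3, s4, s5]
    have h4 : R * (-1) ≤ R * z := mul_le_mul_of_nonneg_left hz1 hR0
    linarith only [hmain, h4]

set_option maxHeartbeats 4000000 in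
/-- Lower bound on the cosine of the angle between averaged true and (rescaled)
estimated gradients: if `‖u_i‖ = ‖v_i‖`, `∠(u_i, v_i) < θ` for all `i`,
`β = (∑ ‖u_i‖)/(n ‖ū‖)` and `cos θ - √(β²-1) sin θ > 0`, then
`cos ∠(ū, v̄) > (cos θ - √(β²-1) sin θ) / (1 + 2 β sin(θ/2))`. -/
theorem cos_angle_avg_lower_bound {d : ℕ} (n : ℕ) (θ : ℝ)
    (hθ0 : 0 < θ) (hθ : θ < Real.pi / 2)
    (u v : Fin n → EuclideanSpace ℝ (Fin d))
    (hu : ∀ i, u i ≠ 0) (hv : ∀ i, v i ≠ 0)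
    (hnorm : ∀ i, ‖u i‖ = ‖v i‖) (hangle : ∀ i, angle (u i) (v i) < θ)
    (ubar vbar : EuclideanSpace ℝ (Fin d))
    (hubar : ubar = (n : ℝ)⁻¹ • ∑ i, u i) (hvbar : vbar = (n : ℝ)⁻¹ • ∑ i, v i)
    (hub : ubar ≠ 0) (hvb : vbar ≠ 0)
    (β : ℝ) (hβ : β = (∑ i, ‖u i‖) / ((n : ℝ) * ‖ubar‖))
    (hpos : 0 < Real.cos θ - Real.sqrt (β ^ 2 - 1) * Real.sin θ) :
    (Real.cos θ - Real.sqrt (β ^ 2 - 1) * Real.sin θ) / (1 + 2 * β * Real.sin (θ / 2)) <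
      Real.cos (angle ubar vbar) := by
  have hπ := Real.pi_pos
  have hθπ : θ < Real.pi := by linarith
  have hcosθ : 0 < Real.cos θ := Real.cos_pos_of_mem_Ioo ⟨by linarith, hθ⟩
  have hsinθ : 0 < Real.sin θ := Real.sin_pos_of_pos_of_lt_pi hθ0 hθπ
  have hsinhalf : 0 < Real.sin (θ / 2) := Real.sin_pos_of_pos_of_lt_pi (by linarith) (by linarith)
  have hn0 : n ≠ 0 := by
    rintro rfl
    apply hub
    rw [hubar]
    simp
  have hn : (0 : ℝ) < n := by exact_mod_cast Nat.pos_of_ne_zero hn0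
  have hnne : (n : ℝ) ≠ 0 := hn.ne'
  have hU : 0 < ‖ubar‖ := norm_pos_iff.mpr hub
  have hV : 0 < ‖vbar‖ := norm_pos_iff.mpr hvb
  have hru : ∀ i, 0 < ‖u i‖ := fun i => norm_pos_iff.mpr (hu i)
  have hsumu : ∑ i, u i = (n : ℝ) • ubar := by
    rw [hubar]; exact (smul_inv_smul₀ hnne _).symm
  have hsumv : ∑ i, v i = (n : ℝ) • vbar := by
    rw [hvbar]; exact (smul_inv_smul₀ hnne _).symm
  have hSU : ∑ i, ‖u i‖ = β * ((n : ℝ) * ‖ubar‖) := by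
    rw [hβ]; field_simp
  have hβ1 : 1 ≤ β := by
    have h1 : ‖(n : ℝ) • ubar‖ ≤ ∑ i, ‖u i‖ := hsumu ▸ norm_sum_le _ _
    rw [norm_smul, Real.norm_eq_abs, abs_of_nonneg hn.le] at h1
    rw [hβ, le_div_iff₀ (by positivity)]
    linarith
  set R := Real.sqrt (β ^ 2 - 1) with hRdef
  have hR0 : 0 ≤ R := Real.sqrt_nonneg _
  have hR2 : R ^ 2 = β ^ 2 - 1 := Real.sq_sqrt (by nlinarith [hβ1])
  have hiu : ∑ i, ⟪ubar, u i⟫ = (n : ℝ) * ‖ubar‖ ^ 2 := by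
    rw [← inner_sum, hsumu, real_inner_smul_right, real_inner_self_eq_norm_sq]
  have hiv : ∑ i, ⟪ubar, v i⟫ = (n : ℝ) * ⟪ubar, vbar⟫ := by
    rw [← inner_sum, hsumv, real_inner_smul_right]
  have hinner_u_le : ∀ i, ⟪ubar, u i⟫ ≤ ‖ubar‖ * ‖u i‖ := fun i => real_inner_le_norm _ _
  -- Numerator bound
  have hnum : ‖ubar‖ ^ 2 * (Real.cos θ - R * Real.sin θ) ≤ ⟪ubar, vbar⟫ := by
    by_cases hβeq : β = 1
    · have hRz : R = 0 := by rw [hRdef, hβeq]; simp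
      have hsum0 : ∑ i, (‖ubar‖ * ‖u i‖ - ⟪ubar, u i⟫) = 0 := by
        rw [Finset.sum_sub_distrib, ← Finset.mul_sum, hiu, hSU, hβeq]; ring
      have halign : ∀ i, ⟪ubar, u i⟫ = ‖ubar‖ * ‖u i‖ := by
        have h := (Finset.sum_eq_zero_iff_of_nonneg
          (fun i _ => sub_nonneg.mpr (hinner_u_le i))).mp hsum0
        intro i
        have := h i (Finset.mem_univ i)
        linarith
      have hper : ∀ i, Real.cos θ * (‖ubar‖ * ‖u i‖) ≤ ⟪ubar, v i⟫ := by
        intro i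
        have hcai : Real.cos (angle ubar (u i)) = 1 := by
          rw [cos_angle, halign i]
          exact div_self (mul_pos hU (hru i)).ne'
        have hang0 : angle ubar (u i) = 0 := cos_eq_one_iff_angle_eq_zero.mp hcai
        have hsai : Real.sin (angle ubar (u i)) = 0 := by rw [hang0]; simp
        have hsph := cos_angle_ge_aux ubar (u i) (v i)
        rw [hcai, hsai] at hsph
        have hyc : Real.cos θ ≤ Real.cos (angle (u i) (v i)) :=
          Real.cos_le_cos_of_nonneg_of_le_pi (angle_nonneg _ _) hθπ.le (hangle i).le
        have hz : Real.cos θ ≤ Real.cos (angle ubar (v i)) := by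
          linarith only [hsph, hyc]
        have hzz : Real.cos (angle ubar (v i)) * (‖ubar‖ * ‖u i‖) = ⟪ubar, v i⟫ := by
          have h := cos_angle_mul_norm_mul_norm ubar (v i)
          rw [← hnorm i] at h
          exact h
        calc Real.cos θ * (‖ubar‖ * ‖u i‖)
            ≤ Real.cos (angle ubar (v i)) * (‖ubar‖ * ‖u i‖) :=
              mul_le_mul_of_nonneg_right hz (by positivity)
          _ = ⟪ubar, v i⟫ := hzz
      have hsum := Finset.sum_le_sum (fun i (_ : i ∈ Finset.univ) => hper i)
      have hL : ∑ i, Real.cos θ * (‖ubar‖ * ‖u i‖) =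
          Real.cos θ * ‖ubar‖ * (β * ((n : ℝ) * ‖ubar‖)) := by
        rw [← hSU, Finset.mul_sum]
        exact Finset.sum_congr rfl (fun i _ => by ring)
      rw [hL, hiv, hβeq] at hsum
      rw [hRz]
      have h9 : (n : ℝ) * (‖ubar‖ ^ 2 * (Real.cos θ - 0 * Real.sin θ)) ≤
          (n : ℝ) * ⟪ubar, vbar⟫ := by
        calc (n : ℝ) * (‖ubar‖ ^ 2 * (Real.cos θ - 0 * Real.sin θ))
            = Real.cos θ * ‖ubar‖ * (1 * ((n : ℝ) * ‖ubar‖)) := by ring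
          _ ≤ _ := hsum
      exact le_of_mul_le_mul_left h9 hn
    · have hβgt : 1 < β := lt_of_le_of_ne hβ1 (Ne.symm hβeq)
      have hRpos : 0 < R := Real.sqrt_pos.mpr (by nlinarith)
      have hper : ∀ i, R * Real.cos θ * ⟪ubar, u i⟫ -
          Real.sin θ * (β * (‖ubar‖ * ‖u i‖) - ⟪ubar, u i⟫) ≤ R * ⟪ubar, v i⟫ := by
        intro i
        have hzb := scalar_core (α := angle ubar (u i)) (t := angle (u i) (v i))
          hθ0 hθπ hsinθ hcosθ (angle_nonneg _ _) (angle_le_pi _ _) (angle_nonneg _ _)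
          (hangle i).le hβ1 hR0 hR2 (Real.neg_one_le_cos _)
          (cos_angle_ge_aux ubar (u i) (v i))
        have hUr : 0 < ‖ubar‖ * ‖u i‖ := mul_pos hU (hru i)
        have hc : Real.cos (angle ubar (u i)) * (‖ubar‖ * ‖u i‖) = ⟪ubar, u i⟫ :=
          cos_angle_mul_norm_mul_norm _ _
        have hzz : Real.cos (angle ubar (v i)) * (‖ubar‖ * ‖u i‖) = ⟪ubar, v i⟫ := by
          have h := cos_angle_mul_norm_mul_norm ubar (v i)
          rw [← hnorm i] at h
          exact h
        calc R * Real.cos θ * ⟪ubar, u i⟫ -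
            Real.sin θ * (β * (‖ubar‖ * ‖u i‖) - ⟪ubar, u i⟫)
            = (R * Real.cos θ * Real.cos (angle ubar (u i)) -
                Real.sin θ * (β - Real.cos (angle ubar (u i)))) * (‖ubar‖ * ‖u i‖) := by
              rw [← hc]; ring
          _ ≤ (R * Real.cos (angle ubar (v i))) * (‖ubar‖ * ‖u i‖) :=
              mul_le_mul_of_nonneg_right hzb hUr.le
          _ = R * ⟪ubar, v i⟫ := by rw [← hzz]; ring
      have hsum := Finset.sum_le_sum (fun i (_ : i ∈ Finset.univ) => hper i)
      have hS1 : ∑ i, (R * Real.cos θ * ⟪ubar, u i⟫ -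
          Real.sin θ * (β * (‖ubar‖ * ‖u i‖) - ⟪ubar, u i⟫)) =
          (n : ℝ) * ‖ubar‖ ^ 2 * (R * Real.cos θ - (β ^ 2 - 1) * Real.sin θ) := by
        rw [Finset.sum_sub_distrib]
        rw [show ∑ i, R * Real.cos θ * ⟪ubar, u i⟫ =
          R * Real.cos θ * ∑ i, ⟪ubar, u i⟫ from (Finset.mul_sum _ _ _).symm]
        rw [show ∑ i, Real.sin θ * (β * (‖ubar‖ * ‖u i‖) - ⟪ubar, u i⟫) =
          Real.sin θ * ∑ i, (β * (‖ubar‖ * ‖u i‖) - ⟪ubar, u i⟫) from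
          (Finset.mul_sum _ _ _).symm]
        rw [Finset.sum_sub_distrib, hiu]
        rw [show ∑ i, β * (‖ubar‖ * ‖u i‖) = β * ‖ubar‖ * ∑ i, ‖u i‖ by
          rw [Finset.mul_sum]; exact Finset.sum_congr rfl (fun i _ => by ring)]
        rw [hSU]
        ring
      have hS2 : ∑ i, R * ⟪ubar, v i⟫ = R * ((n : ℝ) * ⟪ubar, vbar⟫) := by
        rw [← Finset.mul_sum, hiv]
      rw [hS1, hS2] at hsum
      have h9 : ((n : ℝ) * R) * (‖ubar‖ ^ 2 * (Real.cos θ - R * Real.sin θ)) ≤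
          ((n : ℝ) * R) * ⟪ubar, vbar⟫ := by
        calc ((n : ℝ) * R) * (‖ubar‖ ^ 2 * (Real.cos θ - R * Real.sin θ))
            = (n : ℝ) * ‖ubar‖ ^ 2 * (R * Real.cos θ - R ^ 2 * Real.sin θ) := by ring
          _ = (n : ℝ) * ‖ubar‖ ^ 2 * (R * Real.cos θ - (β ^ 2 - 1) * Real.sin θ) := by
              rw [hR2]
          _ ≤ R * ((n : ℝ) * ⟪ubar, vbar⟫) := hsum
          _ = ((n : ℝ) * R) * ⟪ubar, vbar⟫ := by ring
      exact le_of_mul_le_mul_left h9 (mul_pos hn hRpos)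
  -- Denominator bound
  have hhalf : Real.cos θ = 1 - 2 * Real.sin (θ / 2) ^ 2 := by
    have h1 := Real.cos_two_mul' (θ / 2)
    have h2 := Real.sin_sq_add_cos_sq (θ / 2)
    rw [show 2 * (θ / 2) = θ by ring] at h1
    linarith
  have hdiff : ‖vbar - ubar‖ < 2 * β * Real.sin (θ / 2) * ‖ubar‖ := by
    have h1 : vbar - ubar = (n : ℝ)⁻¹ • (∑ i, (v i - u i)) := by
      rw [hubar, hvbar, ← smul_sub, Finset.sum_sub_distrib]
    have hper : ∀ i, ‖v i - u i‖ < 2 * ‖u i‖ * Real.sin (θ / 2) := by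
      intro i
      have hcos : Real.cos θ < Real.cos (angle (u i) (v i)) :=
        Real.cos_lt_cos_of_nonneg_of_le_pi (angle_nonneg _ _) hθπ.le (hangle i)
      have hinner : Real.cos (angle (u i) (v i)) * (‖u i‖ * ‖u i‖) = ⟪u i, v i⟫ := by
        have h := cos_angle_mul_norm_mul_norm (u i) (v i)
        rw [← hnorm i] at h
        exact h
      have hnsq : ‖v i - u i‖ ^ 2 = ‖v i‖ ^ 2 - 2 * ⟪v i, u i⟫ + ‖u i‖ ^ 2 :=
        norm_sub_sq_real _ _
      rw [real_inner_comm (u i) (v i), ← hnorm i] at hnsq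
      have hip2 : (1 - 2 * Real.sin (θ / 2) ^ 2) * (‖u i‖ * ‖u i‖) < ⟪u i, v i⟫ := by
        rw [← hhalf, ← hinner]
        exact mul_lt_mul_of_pos_right hcos (mul_pos (hru i) (hru i))
      have hb : 0 < 2 * ‖u i‖ * Real.sin (θ / 2) :=
        mul_pos (mul_pos two_pos (hru i)) hsinhalf
      have hlt : ‖v i - u i‖ ^ 2 < (2 * ‖u i‖ * Real.sin (θ / 2)) ^ 2 := by
        nlinarith [hnsq, hip2]
      exact lt_of_pow_lt_pow_left₀ 2 hb.le hlt
    have hne : (Finset.univ : Finset (Fin n)).Nonempty :=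
      ⟨⟨0, Nat.pos_of_ne_zero hn0⟩, Finset.mem_univ _⟩
    have h2 : ‖∑ i, (v i - u i)‖ < ∑ i, (2 * ‖u i‖ * Real.sin (θ / 2)) := by
      calc ‖∑ i, (v i - u i)‖ ≤ ∑ i, ‖v i - u i‖ := norm_sum_le _ _
        _ < _ := Finset.sum_lt_sum_of_nonempty hne (fun i _ => hper i)
    have h3 : ∑ i, (2 * ‖u i‖ * Real.sin (θ / 2)) =
        2 * Real.sin (θ / 2) * (β * ((n : ℝ) * ‖ubar‖)) := by
      rw [← hSU, Finset.mul_sum]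
      exact Finset.sum_congr rfl (fun i _ => by ring)
    rw [h1, norm_smul, norm_inv, Real.norm_eq_abs, abs_of_nonneg hn.le]
    calc ((n : ℝ))⁻¹ * ‖∑ i, (v i - u i)‖ <
        ((n : ℝ))⁻¹ * (2 * Real.sin (θ / 2) * (β * ((n : ℝ) * ‖ubar‖))) := by
          apply mul_lt_mul_of_pos_left _ (inv_pos.mpr hn)
          rw [← h3]; exact h2
      _ = 2 * β * Real.sin (θ / 2) * ‖ubar‖ := by field_simp
  have hVlt : ‖vbar‖ < ‖ubar‖ * (1 + 2 * β * Real.sin (θ / 2)) := by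
    have h := norm_sub_norm_le vbar ubar
    have : ‖ubar‖ * (1 + 2 * β * Real.sin (θ / 2)) =
        ‖ubar‖ + 2 * β * Real.sin (θ / 2) * ‖ubar‖ := by ring
    linarith only [h, hdiff, this]
  -- Conclusion
  have hβpos : 0 < β := by linarith
  have hD : 0 < 1 + 2 * β * Real.sin (θ / 2) := by positivity
  rw [cos_angle, div_lt_div_iff₀ hD (by positivity)]
  have h1 : (Real.cos θ - R * Real.sin θ) * (‖ubar‖ * ‖vbar‖) <
      (Real.cos θ - R * Real.sin θ) *
        (‖ubar‖ * (‖ubar‖ * (1 + 2 * β * Real.sin (θ / 2)))) := by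
    apply mul_lt_mul_of_pos_left _ hpos
    exact mul_lt_mul_of_pos_left hVlt hU
  have h2 : ‖ubar‖ ^ 2 * (Real.cos θ - R * Real.sin θ) * (1 + 2 * β * Real.sin (θ / 2)) ≤
      ⟪ubar, vbar⟫ * (1 + 2 * β * Real.sin (θ / 2)) :=
    mul_le_mul_of_nonneg_right hnum hD.le
  have h3 : (Real.cos θ - R * Real.sin θ) *
      (‖ubar‖ * (‖ubar‖ * (1 + 2 * β * Real.sin (θ / 2)))) =
      ‖ubar‖ ^ 2 * (Real.cos θ - R * Real.sin θ) * (1 + 2 * β * Real.sin (θ / 2)) := by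
    ring
  linarith only [h1, h2, h3]
end

section
/- Let ℓ : ℝ^n → ℝ be differentiable, μ-strongly convex and L-smooth with 0 < μ ≤ L, and let w* be its global minimizer. Then for every w ≠ w*, the gradient ∇ℓ(w) is nonzero and cos ∠(∇ℓ(w), w − w*) ≥ √(μ/L); equivalently, ∠(∇ℓ(w), w − w*) ≤ arccos√(μ/L), the convex-smooth angle of ℓ. -/
open InnerProductGeometry RealInnerProductSpace

/-- For a differentiable, `μ`-strongly convex and `L`-smooth function with global
minimizer `w*`, for every `w ≠ w*` the gradient is nonzero and
`cos ∠(∇ℓ(w), w - w*) ≥ √(μ/L)`, equivalently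
`∠(∇ℓ(w), w - w*) ≤ arccos √(μ/L)` (the convex-smooth angle). -/
theorem grad_angle_le_convex_smooth_angle {n : ℕ} (ℓ : EuclideanSpace ℝ (Fin n) → ℝ)
    (μ L : ℝ) (hμ : 0 < μ) (hμL : μ ≤ L)
    (hdiff : Differentiable ℝ ℓ)
    (hsc : ∀ a b : EuclideanSpace ℝ (Fin n),
      ℓ a + ⟪gradient ℓ a, b - a⟫ + μ / 2 * ‖b - a‖ ^ 2 ≤ ℓ b)
    (hsm : ∀ a b : EuclideanSpace ℝ (Fin n),
      ℓ b ≤ ℓ a + ⟪gradient ℓ a, b - a⟫ + L / 2 * ‖b - a‖ ^ 2)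
    (wstar : EuclideanSpace ℝ (Fin n)) (hmin : ∀ w, ℓ wstar ≤ ℓ w)
    (w : EuclideanSpace ℝ (Fin n)) (hw : w ≠ wstar) :
    gradient ℓ w ≠ 0 ∧
    Real.sqrt (μ / L) ≤ Real.cos (angle (gradient ℓ w) (w - wstar)) ∧
    angle (gradient ℓ w) (w - wstar) ≤ Real.arccos (Real.sqrt (μ / L)) := by

  have hL : 0 < L := hμ.trans_le hμL
  set g := gradient ℓ w with hg
  set x : EuclideanSpace ℝ (Fin n) := w - wstar with hx
  have hxne : x ≠ 0 := sub_ne_zero.mpr hw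
  have hxpos : 0 < ‖x‖ := norm_pos_iff.mpr hxne
  -- strong convexity at (w, wstar)
  have h1 : ℓ w - ℓ wstar + μ / 2 * ‖x‖ ^ 2 ≤ ⟪g, x⟫ := by
    have h := hsc w wstar
    have hsub : wstar - w = -x := by rw [hx]; abel
    rw [hsub, inner_neg_right, norm_neg] at h
    linarith
  -- smoothness gives ℓ w - ℓ wstar ≥ ‖g‖²/(2L)
  have h2 : ‖g‖ ^ 2 / (2 * L) ≤ ℓ w - ℓ wstar := by
    have h := hsm w (w - L⁻¹ • g)
    have hsub : (w - L⁻¹ • g) - w = -(L⁻¹ • g) := by abel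
    rw [hsub, inner_neg_right, real_inner_smul_right, real_inner_self_eq_norm_sq,
      norm_neg, norm_smul, Real.norm_eq_abs, abs_of_pos (inv_pos.mpr hL)] at h
    have hmb := hmin (w - L⁻¹ • g)
    have hLne : L ≠ 0 := ne_of_gt hL
    have : ℓ wstar ≤ ℓ w - ‖g‖ ^ 2 / (2 * L) := by
      calc ℓ wstar ≤ ℓ (w - L⁻¹ • g) := hmb
        _ ≤ ℓ w + -(L⁻¹ * ‖g‖ ^ 2) + L / 2 * (L⁻¹ * ‖g‖) ^ 2 := h
        _ = ℓ w - ‖g‖ ^ 2 / (2 * L) := by field_simp; ring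
    linarith
  have h3 : ‖g‖ ^ 2 / (2 * L) + μ / 2 * ‖x‖ ^ 2 ≤ ⟪g, x⟫ := by linarith
  have hgxpos : 0 < ⟪g, x⟫ := by
    have : (0:ℝ) < μ / 2 * ‖x‖ ^ 2 := by positivity
    have hnn : (0:ℝ) ≤ ‖g‖ ^ 2 / (2 * L) := by positivity
    linarith
  have hgne : g ≠ 0 := by
    intro h0
    rw [h0, inner_zero_left] at hgxpos
    exact lt_irrefl 0 hgxpos
  have hgpos : 0 < ‖g‖ := norm_pos_iff.mpr hgne
  set s := Real.sqrt (μ / L) with hs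
  have hs2 : s ^ 2 = μ / L := Real.sq_sqrt (by positivity)
  have hsnn : 0 ≤ s := Real.sqrt_nonneg _
  have hsL : L * s ^ 2 = μ := by rw [hs2]; field_simp
  have h3' : ‖g‖ ^ 2 + μ * L * ‖x‖ ^ 2 ≤ 2 * L * ⟪g, x⟫ := by
    have h := mul_le_mul_of_nonneg_right h3 (by linarith : (0:ℝ) ≤ 2 * L)
    rw [add_mul, div_mul_cancel₀ _ (by positivity : (2 * L : ℝ) ≠ 0)] at h
    nlinarith [h]
  have hμs : μ * L * ‖x‖ ^ 2 = L ^ 2 * s ^ 2 * ‖x‖ ^ 2 := by rw [← hsL]; ring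
  have hkey : s * ‖g‖ * ‖x‖ ≤ ⟪g, x⟫ := by
    have h4 : 2 * L * (s * ‖g‖ * ‖x‖) ≤ 2 * L * ⟪g, x⟫ := by
      nlinarith [sq_nonneg (‖g‖ - L * s * ‖x‖), hμs, h3']
    exact le_of_mul_le_mul_left h4 (by linarith)
  have hcos : s ≤ ⟪g, x⟫ / (‖g‖ * ‖x‖) := by
    rw [le_div_iff₀ (by positivity)]
    linarith [hkey]
  refine ⟨hgne, ?_, ?_⟩
  · rw [cos_angle]; exact hcos
  · rw [angle]
    rw [Real.arccos_eq_pi_div_two_sub_arcsin, Real.arccos_eq_pi_div_two_sub_arcsin]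
    have := Real.monotone_arcsin hcos
    linarith
end

section
/- Let w, w* ∈ ℝ^n with w ≠ w*, let g ∈ ℝ^n be nonzero, and let θ ∈ [0, π/2) satisfy cos ∠(g, w − w*) ≥ cos θ. Then for the learning rate η = cos θ·‖w − w*‖/‖g‖, the update satisfies ‖(w − η·g) − w*‖ ≤ sin θ·‖w − w*‖. -/
open InnerProductGeometry
open scoped RealInnerProductSpace

/-- Geometric one-step contraction: if `cos ∠(g, w - w*) ≥ cos θ` with
`θ ∈ [0, π/2)`, then the update with learning rate `η = cos θ · ‖w - w*‖ / ‖g‖`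
satisfies `‖(w - η • g) - w*‖ ≤ sin θ · ‖w - w*‖`. -/
theorem one_step_geometric_contraction {n : ℕ} (w wstar g : EuclideanSpace ℝ (Fin n))
    (hw : w ≠ wstar) (hg : g ≠ 0) (θ : ℝ) (hθ0 : 0 ≤ θ) (hθ : θ < Real.pi / 2)
    (hangle : Real.cos θ ≤ Real.cos (angle g (w - wstar))) :
    ‖w - (Real.cos θ * ‖w - wstar‖ / ‖g‖) • g - wstar‖ ≤ Real.sin θ * ‖w - wstar‖ := by
  set x := w - wstar with hx
  have hx0 : x ≠ 0 := sub_ne_zero.mpr hw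
  have hxn : (0:ℝ) < ‖x‖ := norm_pos_iff.mpr hx0
  have hgn : (0:ℝ) < ‖g‖ := norm_pos_iff.mpr hg
  set η : ℝ := Real.cos θ * ‖x‖ / ‖g‖ with hη
  have hrw : w - η • g - wstar = x - η • g := by rw [hx]; abel
  rw [hrw]
  have hcosθ : 0 < Real.cos θ := Real.cos_pos_of_mem_Ioo ⟨by linarith [Real.pi_pos], hθ⟩
  have hsinθ : 0 ≤ Real.sin θ :=
    Real.sin_nonneg_of_nonneg_of_le_pi hθ0 (by linarith [Real.pi_pos, hθ.le])
  have hinner : Real.cos θ * (‖g‖ * ‖x‖) ≤ ⟪g, x⟫ := by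
    have h := InnerProductGeometry.cos_angle_mul_norm_mul_norm g x
    calc Real.cos θ * (‖g‖ * ‖x‖) ≤ Real.cos (angle g x) * (‖g‖ * ‖x‖) := by
          apply mul_le_mul_of_nonneg_right hangle; positivity
      _ = ⟪g, x⟫ := h
  have hη0 : 0 ≤ η := by positivity
  have hsq : ‖x - η • g‖ ^ 2 ≤ (Real.sin θ * ‖x‖) ^ 2 := by
    have hexp : ‖x - η • g‖ ^ 2 = ‖x‖ ^ 2 - 2 * (η * ⟪g, x⟫) + η ^ 2 * ‖g‖ ^ 2 := by
      rw [norm_sub_sq_real, real_inner_smul_right, norm_smul, real_inner_comm]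
      simp [abs_of_nonneg hη0, mul_pow]
    rw [hexp]
    have hη2 : η ^ 2 * ‖g‖ ^ 2 = Real.cos θ ^ 2 * ‖x‖ ^ 2 := by
      rw [hη]; field_simp
    have h2 : 2 * (η * (Real.cos θ * (‖g‖ * ‖x‖))) ≤ 2 * (η * ⟪g, x⟫) := by
      have := mul_le_mul_of_nonneg_left hinner hη0
      linarith
    have hηval : 2 * (η * (Real.cos θ * (‖g‖ * ‖x‖))) = 2 * Real.cos θ ^ 2 * ‖x‖ ^ 2 := by
      rw [hη]; field_simp
    have hsin2 : Real.sin θ ^ 2 = 1 - Real.cos θ ^ 2 := by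
      have := Real.sin_sq_add_cos_sq θ; linarith
    rw [hη2]
    rw [hηval] at h2
    nlinarith
  have h1 : 0 ≤ Real.sin θ * ‖x‖ := by positivity
  nlinarith [norm_nonneg (x - η • g)]
end
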